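/- arXiv:0806.1561 — 5 statements merged into one kernel-verified Lean document; each statement's English description precedes it below -/
import Mathlib

section
/- For all integers m ≥ n ≥ 1, every coefficient of the polynomial N_{m+1}(q)·N_{n−1}(q) − N_m(q)·N_n(q) is nonnegative. In other words, the sequence of Narayana polynomials (N_n(q))_{n≥0} is strongly q-log-convex. -/
open Polynomial Finset

def izc (n : ℕ) (j : ℤ) : ℤ := if 0 ≤ j then n.choose j.toNat else 0
lemma izc_neg {n : ℕ} {j : ℤ} (h : j < 0) : izc n j = 0 := by simp [izc, not_le.mpr h]
lemma izc_nat (n k : ℕ) : izc n (k : ℤ) = n.choose k := by simp [izc]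
lemma izc_big {n : ℕ} {j : ℤ} (h : (n : ℤ) < j) : izc n j = 0 := by
  have h0 : 0 ≤ j := le_of_lt (lt_of_le_of_lt (Int.ofNat_nonneg n) h)
  have : n < j.toNat := by omega
  simp [izc, h0, Nat.choose_eq_zero_of_lt this]
lemma izc_pascal (n : ℕ) (j : ℤ) : izc (n+1) j = izc n j + izc n (j-1) := by
  rcases lt_trichotomy j 0 with h | h | h
  · rw [izc_neg h, izc_neg h, izc_neg (by omega)]; ring
  · subst h; simp [izc]
  · obtain ⟨k, rfl⟩ : ∃ k : ℕ, j = (k : ℤ) + 1 := ⟨(j-1).toNat, by omega⟩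
    have : ((k:ℤ)+1-1) = (k : ℤ) := by ring
    rw [this]
    have h1 : ((k:ℤ)+1) = ((k+1 : ℕ) : ℤ) := by push_cast; ring
    rw [h1, izc_nat, izc_nat, izc_nat, Nat.choose_succ_succ]
    push_cast; ring
lemma izc_mul (n : ℕ) (j : ℤ) :
    ((n+1 : ℕ) : ℤ) * izc n j = (j+1) * izc (n+1) (j+1) := by
  rcases lt_trichotomy j (-1) with h | h | h
  · rw [izc_neg (by omega), izc_neg (by omega)]; ring
  · subst h; rw [izc_neg (by omega)]; norm_num
  · obtain ⟨k, rfl⟩ : ∃ k : ℕ, j = (k : ℤ) := ⟨j.toNat, by omega⟩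
    have h1 : ((k:ℤ)+1) = ((k+1 : ℕ) : ℤ) := by push_cast; ring
    rw [h1, izc_nat, izc_nat]
    have := Nat.add_one_mul_choose_eq n k
    push_cast at this ⊢
    linarith [this]

/-- `B (n+1) h k` : coefficient of `q^k` in the height-`h` entry of `J^(n+1) e₀`. -/
def B (n : ℕ) (h k : ℤ) : ℤ :=
  izc (n+1) k * izc n (k-h) - izc (n+1) (k+1) * izc n (k-h-1)

lemma B_step (n : ℕ) (h k : ℤ) :
    B (n+1) h k = B n h k + B n (h+1) k + B n (h-1) (k-1) + B n h (k-1) := by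
  simp only [B]
  rw [izc_pascal (n+1) k, izc_pascal (n+1) (k+1), izc_pascal n (k-h),
    izc_pascal n (k-h-1)]
  ring_nf

lemma B_wall (n : ℕ) (j : ℤ) : B n (-1) j + B n 0 j = 0 := by
  simp only [B]
  have p1 : izc (n+1) (j+1) = izc n (j+1) + izc n j := by
    rw [izc_pascal]; congr 1; ring
  have p2 : izc (n+1) j = izc n j + izc n (j-1) := izc_pascal n j
  have e1 : j - (-1) = j + 1 := by ring
  have e2 : j - 0 = j := by ring
  rw [e1, e2, show j+1-1 = j from by ring]
  linear_combination (izc n (j+1) + izc n j) * p2 - (izc n j + izc n (j-1)) * p1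

lemma B_k_neg {n : ℕ} {h k : ℤ} (hh : 0 ≤ h) (hk : k < 0) : B n h k = 0 := by
  simp only [B]
  rw [izc_neg hk, izc_neg (show k - h - 1 < 0 by omega)]
  ring

lemma B_h_big {n : ℕ} {h k : ℤ} (hh : (n+1 : ℤ) < h) : B n h k = 0 := by
  simp only [B]
  by_cases hk : (n+1 : ℤ) < k
  · rw [izc_big hk, izc_big (show (n+1:ℤ) < k+1 by omega)]; ring
  · rw [izc_neg (show k - h < 0 by omega), izc_neg (show k - h - 1 < 0 by omega)]; ring

lemma B_nar (n : ℕ) (k : ℤ) :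
    ((n+1 : ℕ) : ℤ) * B n 0 k = izc (n+1) k * izc (n+1) (k+1) := by
  simp only [B]
  have e3 : k - 0 = k := by ring
  rw [e3]
  have m1 := izc_mul n k
  have m2 := izc_mul n (k-1)
  have e5 : k - 1 + 1 = k := by ring
  rw [e5] at m2
  linear_combination izc (n+1) k * m1 - izc (n+1) (k+1) * m2

noncomputable section
abbrev RR := Polynomial ℚ
abbrev V := ℕ → RR

/-- shift down: (sdn a) 0 = 0, (sdn a) (p+1) = a p -/
def sdn (a : V) : V := fun p => match p with | 0 => 0 | p+1 => a p
def Uop (a : V) : V := fun p => a p + a (p+1)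
def Lop (a : V) : V := fun p => a p + X * sdn a p
def Mop (a : V) : V := Lop (Uop a)
def LTo (a : V) : V := fun p => a p + X * a (p+1)
def UTo (a : V) : V := fun p => a p + sdn a p
def MT (a : V) : V := UTo (LTo a)
def ee : V := fun p => match p with | 0 => 1 | _ => 0

@[simp] lemma sdn_zero (a : V) : sdn a 0 = 0 := rfl
@[simp] lemma sdn_succ (a : V) (p : ℕ) : sdn a (p+1) = a p := rfl
@[simp] lemma ee_zero : ee 0 = 1 := rfl
@[simp] lemma ee_succ (p : ℕ) : ee (p+1) = 0 := rfl

lemma Uop_ee : Uop ee = ee := by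
  funext p; cases p <;> simp [Uop]

lemma Mop_ee : Mop ee = fun p => if p = 0 then 1 else if p = 1 then X else 0 := by
  funext p
  rw [Mop, Uop_ee]
  match p with
  | 0 => simp [Lop]
  | 1 => simp [Lop]
  | (p+2) => simp [Lop]
end

lemma izc_zero_eval (j : ℤ) : izc 0 j = if j = 0 then 1 else 0 := by
  rcases lt_trichotomy j 0 with h | h | h
  · rw [izc_neg h, if_neg (by omega)]
  · subst h; simp [izc]
  · rw [izc_big (by exact_mod_cast h), if_neg (by omega)]

lemma izc_one_eval (j : ℤ) : izc 1 j = if j = 0 ∨ j = 1 then 1 else 0 := by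
  rcases lt_trichotomy j 0 with h | h | h
  · rw [izc_neg h, if_neg (by omega)]
  · subst h; simp [izc]
  · rcases eq_or_lt_of_le (by omega : (1:ℤ) ≤ j) with h1 | h1
    · rw [← h1]; simp [izc]
    · rw [izc_big (by exact_mod_cast h1), if_neg (by omega)]

lemma B_zero_eval (h k : ℤ) (hh : 0 ≤ h) :
    B 0 h k = if h = 0 ∧ k = 0 then 1 else if h = 1 ∧ k = 1 then 1 else 0 := by
  simp only [B, show (0+1 : ℕ) = 1 from rfl, izc_zero_eval, izc_one_eval]
  split_ifs <;> omega

noncomputable section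

lemma Mop_apply_zero (a : V) : (Mop a) 0 = a 0 + a 1 := by simp [Mop, Lop, Uop]
lemma Mop_apply_succ (a : V) (h : ℕ) :
    (Mop a) (h+1) = (a (h+1) + a (h+2)) + X * (a h + a (h+1)) := by
  simp [Mop, Lop, Uop]

theorem y_coeff : ∀ n : ℕ, ∀ h k : ℕ, ((Mop^[n+1] ee) h).coeff k = ((B n h k : ℤ) : ℚ) := by
  intro n
  induction n with
  | zero =>
    intro h k
    rw [Function.iterate_one, Mop_ee]
    match h, k with
    | 0, 0 =>
      rw [B_zero_eval _ _ (by positivity)]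
      norm_num
    | 0, k+1 =>
      rw [B_zero_eval _ _ (by positivity), if_neg (by omega), if_neg (by omega)]
      simp [Polynomial.coeff_one]
    | 1, k =>
      rw [B_zero_eval _ _ (by positivity)]
      norm_num [Polynomial.coeff_X]
      rcases k with _|_|k <;> norm_num
    | (h+2), k =>
      have e1 : ¬(h + 2 = 0) := by omega
      have e2 : ¬(h + 2 = 1) := by omega
      rw [B_zero_eval _ _ (by positivity), if_neg (by omega), if_neg (by omega)]
      simp [e1, e2]
  | succ n IH =>
    intro h k
    rw [Function.iterate_succ_apply']
    match h with
    | 0 =>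
      rw [Mop_apply_zero, coeff_add, IH 0 k, IH 1 k]
      have hs := B_step n 0 (k : ℤ)
      have hw := B_wall n ((k:ℤ)-1)
      rw [show ((0:ℤ)-1) = -1 by ring, show ((0:ℤ)+1) = 1 by ring] at hs
      have hz : B (n+1) 0 (k:ℤ) = B n 0 (k:ℤ) + B n 1 (k:ℤ) := by linarith
      have hzq := congrArg (fun z : ℤ => (z : ℚ)) hz
      push_cast at hzq ⊢
      linarith [hzq]
    | h+1 =>
      rw [Mop_apply_succ]
      rcases k with _|k
      · rw [coeff_add, coeff_add, Polynomial.mul_coeff_zero, coeff_X_zero, zero_mul,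
          IH (h+1) 0, IH (h+2) 0]
        have hs := B_step n ((h:ℤ)+1) 0
        have hz1 : B n (h:ℤ) (-1) = 0 := B_k_neg (by omega) (by norm_num)
        have hz2 : B n ((h:ℤ)+1) (-1) = 0 := B_k_neg (by omega) (by norm_num)
        rw [show ((h:ℤ)+1+1) = ((h:ℤ)+2) by ring, show ((h:ℤ)+1-1) = (h:ℤ) by ring,
          show ((0:ℤ)-1) = -1 by ring, hz1, hz2] at hs
        have hsq := congrArg (fun z : ℤ => (z : ℚ)) hs
        push_cast at hsq ⊢
        linarith [hsq]
      · rw [coeff_add, coeff_add, Polynomial.coeff_X_mul, coeff_add,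
          IH (h+1) (k+1), IH (h+2) (k+1), IH h k, IH (h+1) k]
        have hs := B_step n ((h:ℤ)+1) ((k:ℤ)+1)
        rw [show ((h:ℤ)+1+1) = ((h:ℤ)+2) by ring, show ((h:ℤ)+1-1) = (h:ℤ) by ring,
          show ((k:ℤ)+1-1) = (k:ℤ) by ring] at hs
        have hsq := congrArg (fun z : ℤ => (z : ℚ)) hs
        push_cast at hsq ⊢
        linarith [hsq]


/-- The Narayana polynomial `N_n(q) = ∑_{k=0}^n N(n,k) q^k`, where
`N(n,k) = (1/n) C(n,k) C(n,k+1)` for `n ≥ 1`, and `N_0(q) = 1`. -/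
noncomputable def narayanaPoly (n : ℕ) : Polynomial ℚ :=
  if n = 0 then 1
  else ∑ k ∈ Finset.range (n + 1),
    Polynomial.C ((n.choose k * n.choose (k + 1) : ℚ) / n) * Polynomial.X ^ k

lemma nar_coeff (n k : ℕ) :
    (narayanaPoly (n+1)).coeff k = ((n+1).choose k * (n+1).choose (k+1) : ℚ) / (n+1) := by
  rw [narayanaPoly, if_neg n.succ_ne_zero, Polynomial.finset_sum_coeff]
  simp only [Polynomial.coeff_C_mul, Polynomial.coeff_X_pow, mul_ite, mul_one, mul_zero]
  rw [Finset.sum_ite_eq (Finset.range (n+2)) k]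
  by_cases hk : k ∈ Finset.range (n+2)
  · rw [if_pos hk]
    norm_num
  · rw [if_neg hk]
    have : n + 1 < k + 1 := by simp at hk; omega
    rw [Nat.choose_eq_zero_of_lt this]
    norm_num

lemma nar_eq (n : ℕ) : (Mop^[n] ee) 0 = narayanaPoly n := by
  cases n with
  | zero => simp [narayanaPoly]
  | succ n =>
    apply Polynomial.ext
    intro k
    rw [y_coeff n 0 k, nar_coeff]
    have hB := B_nar n (k : ℤ)
    have h1 : izc (n+1) (k : ℤ) = ((n+1).choose k : ℤ) := izc_nat (n+1) k
    have h2 : izc (n+1) ((k:ℤ)+1) = ((n+1).choose (k+1) : ℤ) := by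
      rw [show ((k:ℤ)+1) = ((k+1 : ℕ) : ℤ) by push_cast; ring, izc_nat]
    rw [h1, h2] at hB
    have hq := congrArg (fun z : ℤ => (z : ℚ)) hB
    push_cast at hq
    have hne : ((n:ℚ)+1) ≠ 0 := by positivity
    rw [eq_div_iff hne]
    push_cast
    linarith [hq]

/-! ### Nonnegativity infrastructure -/

def NN (u : RR) : Prop := ∀ r, 0 ≤ u.coeff r

lemma NN_zero : NN 0 := fun r => by simp
lemma NN_X : NN X := fun r => by
  rw [Polynomial.coeff_X]
  split_ifs <;> norm_num
lemma NN_add {u v : RR} (hu : NN u) (hv : NN v) : NN (u + v) := fun r => by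
  rw [Polynomial.coeff_add]; exact add_nonneg (hu r) (hv r)
lemma NN_mul {u v : RR} (hu : NN u) (hv : NN v) : NN (u * v) := fun r => by
  rw [Polynomial.coeff_mul]
  exact Finset.sum_nonneg fun x _ => mul_nonneg (hu x.1) (hv x.2)

def NNv (a : V) : Prop := ∀ p, NN (a p)

lemma NNv_ee : NNv ee := by
  intro p
  match p with
  | 0 => intro r; simp [Polynomial.coeff_one]; positivity
  | p+1 => exact NN_zero

lemma NNv_LT {a : V} (h : NNv a) : NNv (LTo a) := fun p =>
  NN_add (h p) (NN_mul NN_X (h (p+1)))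
lemma NNv_UT {a : V} (h : NNv a) : NNv (UTo a) := by
  intro p
  match p with
  | 0 => exact NN_add (h 0) NN_zero
  | p+1 => exact NN_add (h (p+1)) (h p)
lemma NNv_MT {a : V} (h : NNv a) : NNv (MT a) := NNv_UT (NNv_LT h)
lemma NNv_MT_iter (d : ℕ) : NNv (MT^[d] ee) := by
  induction d with
  | zero => exact NNv_ee
  | succ d IH => rw [Function.iterate_succ_apply']; exact NNv_MT IH

/-! ### Wedge positivity -/

def Pos (a b : V) : Prop := ∀ p q, p ≤ q → NN (a p * b q - a q * b p)

lemma Pos_Uop {a b : V} (h : Pos a b) : Pos (Uop a) (Uop b) := by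
  intro p q hpq
  rcases eq_or_lt_of_le hpq with rfl | hlt
  · have : Uop a p * Uop b p - Uop a p * Uop b p = 0 := by ring
    rw [this]; exact NN_zero
  · have key : Uop a p * Uop b q - Uop a q * Uop b p
      = (a p * b q - a q * b p) + (a p * b (q+1) - a (q+1) * b p)
        + (a (p+1) * b q - a q * b (p+1)) + (a (p+1) * b (q+1) - a (q+1) * b (p+1)) := by
      simp only [Uop]; ring
    rw [key]
    exact NN_add (NN_add (NN_add (h p q hpq) (h p (q+1) (by omega)))
      (h (p+1) q (by omega))) (h (p+1) (q+1) (by omega))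

lemma Pos_Lop {a b : V} (h : Pos a b) : Pos (Lop a) (Lop b) := by
  intro p q hpq
  rcases eq_or_lt_of_le hpq with rfl | hlt
  · have : Lop a p * Lop b p - Lop a p * Lop b p = 0 := by ring
    rw [this]; exact NN_zero
  · match p, q, hlt with
    | 0, q+1, _ =>
      have key : Lop a 0 * Lop b (q+1) - Lop a (q+1) * Lop b 0
          = (a 0 * b (q+1) - a (q+1) * b 0) + X * (a 0 * b q - a q * b 0) := by
        simp only [Lop, sdn_zero, sdn_succ]; ring
      rw [key]
      exact NN_add (h 0 (q+1) (by omega)) (NN_mul NN_X (h 0 q (by omega)))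
    | p+1, q+1, hlt =>
      have key : Lop a (p+1) * Lop b (q+1) - Lop a (q+1) * Lop b (p+1)
          = (a (p+1) * b (q+1) - a (q+1) * b (p+1))
            + X * (a (p+1) * b q - a q * b (p+1))
            + X * (a p * b (q+1) - a (q+1) * b p)
            + X * X * (a p * b q - a q * b p) := by
        simp only [Lop, sdn_succ]; ring
      rw [key]
      exact NN_add (NN_add (NN_add (h (p+1) (q+1) (by omega))
        (NN_mul NN_X (h (p+1) q (by omega))))
        (NN_mul NN_X (h p (q+1) (by omega))))
        (NN_mul (NN_mul NN_X NN_X) (h p q (by omega)))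

lemma Pos_Mop {a b : V} (h : Pos a b) : Pos (Mop a) (Mop b) := Pos_Lop (Pos_Uop h)

lemma Pos_ee_Mop_ee : Pos ee (Mop ee) := by
  intro p q hpq
  rw [Mop_ee]
  match p, q with
  | 0, 0 => simpa using NN_zero
  | 0, 1 => simpa using NN_X
  | 0, (q+2) => simpa using NN_zero
  | (p+1), q =>
    have hq : q ≠ 0 := by omega
    have : ee (p+1) = 0 := rfl
    have h2 : ee q = 0 := by match q, hq with | q+1, _ => rfl
    simp only [this, h2, zero_mul, mul_zero, sub_zero, zero_sub, neg_zero]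
    exact NN_zero

lemma Pos_y (j : ℕ) : Pos (Mop^[j] ee) (Mop^[j+1] ee) := by
  induction j with
  | zero => simpa using Pos_ee_Mop_ee
  | succ j IH =>
    rw [Function.iterate_succ_apply', Function.iterate_succ_apply' Mop (j+1)]
    exact Pos_Mop IH

lemma Pos_x (d : ℕ) : Pos ee (MT^[d] ee) := by
  intro p q hpq
  rcases eq_or_lt_of_le hpq with rfl | hlt
  · have : ee p * MT^[d] ee p - ee p * MT^[d] ee p = 0 := by ring
    rw [this]; exact NN_zero
  · have h2 : ee q = 0 := by match q, hlt with | q+1, _ => rfl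
    rw [h2]
    match p with
    | 0 =>
      have : ee 0 * MT^[d] ee q - 0 * MT^[d] ee 0 = MT^[d] ee q := by
        rw [ee_zero]; ring
      rw [this]
      exact NNv_MT_iter d q
    | p+1 =>
      have : ee (p+1) * MT^[d] ee q - 0 * MT^[d] ee (p+1) = 0 := by
        rw [ee_succ]; ring
      rw [this]; exact NN_zero

/-! ### Supports and inner products -/

def Supp (a : V) (K : ℕ) : Prop := ∀ p, K ≤ p → a p = 0

lemma Supp.mono {a : V} {K K' : ℕ} (h : Supp a K) (hK : K ≤ K') : Supp a K' :=
  fun p hp => h p (le_trans hK hp)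

lemma supp_ee : Supp ee 1 := by
  intro p hp
  match p, hp with | p+1, _ => rfl

lemma supp_Uop {a : V} {K : ℕ} (h : Supp a K) : Supp (Uop a) K := by
  intro p hp
  simp [Uop, h p hp, h (p+1) (by omega)]

lemma supp_Lop {a : V} {K : ℕ} (h : Supp a K) : Supp (Lop a) (K+1) := by
  intro p hp
  match p, hp with
  | p+1, hp => simp [Lop, sdn_succ, h (p+1) (by omega), h p (by omega)]

lemma supp_Mop {a : V} {K : ℕ} (h : Supp a K) : Supp (Mop a) (K+1) :=
  supp_Lop (supp_Uop h)

lemma supp_Mop_iter (j : ℕ) : Supp (Mop^[j] ee) (j+1) := by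
  induction j with
  | zero => exact supp_ee
  | succ j IH => rw [Function.iterate_succ_apply']; exact supp_Mop IH

lemma supp_LT {a : V} {K : ℕ} (h : Supp a K) : Supp (LTo a) K := by
  intro p hp
  simp [LTo, h p hp, h (p+1) (by omega)]

lemma supp_UT {a : V} {K : ℕ} (h : Supp a K) : Supp (UTo a) (K+1) := by
  intro p hp
  match p, hp with
  | p+1, hp => simp [UTo, sdn_succ, h (p+1) (by omega), h p (by omega)]

lemma supp_MT {a : V} {K : ℕ} (h : Supp a K) : Supp (MT a) (K+1) :=
  supp_UT (supp_LT h)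

lemma supp_MT_iter (j : ℕ) : Supp (MT^[j] ee) (j+1) := by
  induction j with
  | zero => exact supp_ee
  | succ j IH => rw [Function.iterate_succ_apply']; exact supp_MT IH

def ip (D : ℕ) (a b : V) : RR := ∑ p ∈ Finset.range D, a p * b p

lemma ip_ee {D : ℕ} (hD : 0 < D) (b : V) : ip D ee b = b 0 := by
  rw [ip, Finset.sum_eq_single 0]
  · simp
  · intro p hp hp0
    match p, hp0 with | p+1, _ => simp
  · intro h0
    exact absurd (Finset.mem_range.mpr hD) h0

lemma ip_LT {D : ℕ} {a b : V} (ha : a D = 0) : ip D (LTo a) b = ip D a (Lop b) := by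
  rcases Nat.eq_zero_or_pos D with rfl | hD
  · simp [ip]
  obtain ⟨D', rfl⟩ : ∃ D', D = D' + 1 := ⟨D - 1, by omega⟩
  simp only [ip, LTo, Lop, add_mul, mul_add, Finset.sum_add_distrib]
  congr 1
  have lhs2 : ∑ p ∈ Finset.range (D'+1), X * a (p+1) * b p
      = (∑ p ∈ Finset.range D', X * a (p+1) * b p) + X * a (D'+1) * b D' :=
    Finset.sum_range_succ _ _
  have rhs2 : ∑ p ∈ Finset.range (D'+1), a p * (X * sdn b p)
      = (∑ p ∈ Finset.range D', a (p+1) * (X * sdn b (p+1))) + a 0 * (X * sdn b 0) :=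
    Finset.sum_range_succ' _ _
  rw [lhs2, rhs2, ha]
  simp only [sdn_zero, sdn_succ, mul_zero, add_zero, zero_mul]
  apply Finset.sum_congr rfl
  intro p _
  ring

lemma ip_UT {D : ℕ} {a b : V} (hb : b D = 0) : ip D (UTo a) b = ip D a (Uop b) := by
  rcases Nat.eq_zero_or_pos D with rfl | hD
  · simp [ip]
  obtain ⟨D', rfl⟩ : ∃ D', D = D' + 1 := ⟨D - 1, by omega⟩
  simp only [ip, UTo, Uop, add_mul, mul_add, Finset.sum_add_distrib]
  congr 1
  have lhs2 : ∑ p ∈ Finset.range (D'+1), sdn a p * b p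
      = (∑ p ∈ Finset.range D', sdn a (p+1) * b (p+1)) + sdn a 0 * b 0 :=
    Finset.sum_range_succ' _ _
  have rhs2 : ∑ p ∈ Finset.range (D'+1), a p * b (p+1)
      = (∑ p ∈ Finset.range D', a p * b (p+1)) + a D' * b (D'+1) :=
    Finset.sum_range_succ _ _
  rw [lhs2, rhs2, hb]
  simp only [sdn_zero, sdn_succ, mul_zero, add_zero, zero_mul]

lemma ip_MT {D : ℕ} {a b : V} (ha : Supp a D) (hb : Supp b D) :
    ip D (MT a) b = ip D a (Mop b) := by
  rw [MT, ip_UT (hb D le_rfl), ip_LT (ha D le_rfl)]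
  rfl

lemma ip_MT_iter {D : ℕ} (d : ℕ) :
    ∀ (c : V) (K : ℕ), 1 ≤ K → Supp c K → K + d ≤ D →
    ip D (MT^[d] ee) c = ip D ee (Mop^[d] c) := by
  induction d with
  | zero => intro c K _ _ _; rfl
  | succ d IH =>
    intro c K hK hc hKD
    rw [Function.iterate_succ_apply']
    rw [ip_MT ((supp_MT_iter d).mono (by omega)) (hc.mono (by omega))]
    rw [IH (Mop c) (K+1) (by omega) (supp_Mop hc) (by omega)]
    rw [← Function.iterate_succ_apply]

lemma ip_x_y {D : ℕ} (d j : ℕ) (h : j + 1 + d ≤ D) :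
    ip D (MT^[d] ee) (Mop^[j] ee) = narayanaPoly (d + j) := by
  rw [ip_MT_iter d (Mop^[j] ee) (j+1) (by omega) (supp_Mop_iter j) h]
  rw [← Function.iterate_add_apply]
  rw [ip_ee (by omega), nar_eq]

lemma square_pair (D : ℕ) (F : ℕ → ℕ → RR) (hdiag : ∀ p, F p p = 0) :
    ∑ p ∈ Finset.range D, ∑ q ∈ Finset.range D, F p q
    = ∑ p ∈ Finset.range D, ∑ q ∈ Finset.range D,
        (if p < q then F p q + F q p else 0) := by
  induction D with
  | zero => simp
  | succ D IH =>
    rw [Finset.sum_range_succ, Finset.sum_range_succ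
      (fun p => ∑ q ∈ Finset.range (D+1), (if p < q then F p q + F q p else 0))]
    simp only [Finset.sum_range_succ]
    rw [Finset.sum_add_distrib, Finset.sum_add_distrib, IH]
    have h1 : ∑ p ∈ Finset.range D, (if p < D then F p D + F D p else 0)
        = (∑ p ∈ Finset.range D, F p D) + ∑ p ∈ Finset.range D, F D p := by
      rw [← Finset.sum_add_distrib]
      apply Finset.sum_congr rfl
      intro p hp
      rw [if_pos (Finset.mem_range.mp hp)]
    have h2 : ∑ q ∈ Finset.range D, (if D < q then F D q + F q D else 0) = 0 := by
      apply Finset.sum_eq_zero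
      intro q hq
      rw [if_neg (by have := Finset.mem_range.mp hq; omega)]
    rw [h1, h2, hdiag D, if_neg (lt_irrefl D)]
    ring

lemma det_expand (D : ℕ) (x1 x2 y1 y2 : V) :
    ip D x1 y1 * ip D x2 y2 - ip D x1 y2 * ip D x2 y1
    = ∑ p ∈ Finset.range D, ∑ q ∈ Finset.range D,
        (if p < q then (x1 p * x2 q - x1 q * x2 p) * (y1 p * y2 q - y1 q * y2 p)
         else 0) := by
  have step1 : ip D x1 y1 * ip D x2 y2 - ip D x1 y2 * ip D x2 y1
      = ∑ p ∈ Finset.range D, ∑ q ∈ Finset.range D,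
          (x1 p * y1 p * (x2 q * y2 q) - x1 p * y2 p * (x2 q * y1 q)) := by
    simp only [ip, Finset.sum_mul_sum, ← Finset.sum_sub_distrib]
  rw [step1]
  rw [square_pair D _ (fun p => by ring)]
  apply Finset.sum_congr rfl
  intro p _
  apply Finset.sum_congr rfl
  intro q _
  split_ifs with h
  · ring
  · rfl

/-- The Narayana polynomials form a strongly `q`-log-convex sequence: for `m ≥ n ≥ 1`
every coefficient of `N_{m+1}(q) N_{n-1}(q) - N_m(q) N_n(q)` is nonnegative. -/
theorem narayana_strongly_q_log_convex (m n : ℕ) (hn : 1 ≤ n) (hmn : n ≤ m) (r : ℕ) :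
    0 ≤ (narayanaPoly (m + 1) * narayanaPoly (n - 1)
      - narayanaPoly m * narayanaPoly n).coeff r := by
  set D := m + 3 with hD
  set d := m + 1 - n with hd
  have hdn : d + n = m + 1 := by omega
  have hdn' : d + (n-1) = m := by omega
  set x2 : V := MT^[d] ee with hx2
  set y1 : V := Mop^[n-1] ee with hy1
  set y2 : V := Mop^[n] ee with hy2
  have e1 : ip D ee y1 = narayanaPoly (n-1) := by rw [hy1, ip_ee (by omega), nar_eq]
  have e2 : ip D ee y2 = narayanaPoly n := by rw [hy2, ip_ee (by omega), nar_eq]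
  have e3 : ip D x2 y1 = narayanaPoly m := by
    rw [hx2, hy1, ip_x_y d (n-1) (by omega), hdn']
  have e4 : ip D x2 y2 = narayanaPoly (m+1) := by
    rw [hx2, hy2, ip_x_y d n (by omega), hdn]
  have key : narayanaPoly (m + 1) * narayanaPoly (n - 1)
      - narayanaPoly m * narayanaPoly n
      = ip D ee y1 * ip D x2 y2 - ip D ee y2 * ip D x2 y1 := by
    rw [e1, e2, e3, e4]; ring
  rw [key, det_expand]
  rw [Polynomial.finset_sum_coeff]
  apply Finset.sum_nonneg
  intro p _
  rw [Polynomial.finset_sum_coeff]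
  apply Finset.sum_nonneg
  intro q _
  split_ifs with h
  · have hx : NN (ee p * x2 q - ee q * x2 p) := Pos_x d p q (le_of_lt h)
    have hy : NN (y1 p * y2 q - y1 q * y2 p) := by
      have := Pos_y (n-1) p q (le_of_lt h)
      rw [show n - 1 + 1 = n by omega] at this
      exact this
    exact NN_mul hx hy r
  · simp

end
end

section
/- For every integer m ≥ 1, every coefficient of the polynomial N_{m+1}(q)·N_{m−1}(q) − N_m(q)^2 is nonnegative. In other words, the Narayana polynomials N_n(q) form a q-log-convex sequence. -/
open Polynomial Finset

namespace NaraAux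

/-- Scaled coefficients of the auxiliary triangle. -/
def w (n k j : ℕ) : ℚ :=
  (n.choose j : ℚ) * (k * n.choose (k + j) + (k + 1) * n.choose (k + j + 1))

/-- The auxiliary polynomial triangle (rows scaled by `n`). -/
noncomputable def A (n k : ℕ) : Polynomial ℚ :=
  ∑ j ∈ range (n + 1), C (w n k j) * X ^ j

lemma w_nonneg (n k j : ℕ) : 0 ≤ w n k j := by unfold w; positivity

lemma w_zero_of_lt {n j : ℕ} (k : ℕ) (h : n < j) : w n k j = 0 := by
  simp [w, Nat.choose_eq_zero_of_lt h]

lemma w_zero_of_klt {n k : ℕ} (j : ℕ) (h : n < k) : w n k j = 0 := by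
  have h1 : n < k + j := by omega
  have h2 : n < k + j + 1 := by omega
  simp [w, Nat.choose_eq_zero_of_lt h1, Nat.choose_eq_zero_of_lt h2]

lemma coeff_A (n k j : ℕ) : (A n k).coeff j = w n k j := by
  rw [A, Polynomial.finset_sum_coeff]
  simp only [coeff_C_mul, coeff_X_pow, mul_ite, mul_one, mul_zero]
  rw [Finset.sum_ite_eq (range (n+1)) j (fun i => w n k i)]
  by_cases h : j ∈ range (n + 1)
  · simp [h]
  · simp only [h, if_false]
    exact (w_zero_of_lt k (by simpa using h)).symm

lemma A_zero_of_klt {n k : ℕ} (h : n < k) : A n k = 0 := by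
  ext j
  simp [coeff_A, w_zero_of_klt j h]

/-- Coefficientwise-nonnegative polynomials. -/
def CN (p : Polynomial ℚ) : Prop := ∀ r, 0 ≤ p.coeff r

lemma CN_zero : CN 0 := fun r => by simp
lemma CN_one : CN 1 := fun r => by
  simp only [coeff_one]; split <;> norm_num
lemma CN_X : CN X := fun r => by
  simp only [coeff_X]; split <;> norm_num
lemma CN_add {p q : Polynomial ℚ} (hp : CN p) (hq : CN q) : CN (p + q) := fun r => by
  simpa using add_nonneg (hp r) (hq r)
lemma CN_mul {p q : Polynomial ℚ} (hp : CN p) (hq : CN q) : CN (p * q) := fun r => by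
  rw [coeff_mul]
  exact Finset.sum_nonneg fun x _ => mul_nonneg (hp x.1) (hq x.2)
lemma CN_sum {α : Type*} {s : Finset α} {f : α → Polynomial ℚ} (h : ∀ a ∈ s, CN (f a)) :
    CN (∑ a ∈ s, f a) := fun r => by
  rw [Polynomial.finset_sum_coeff]
  exact Finset.sum_nonneg fun a ha => h a ha r
lemma CN_ite {p : Polynomial ℚ} (c : Prop) [Decidable c] (hp : CN p) :
    CN (if c then p else 0) := by
  split
  · exact hp
  · exact CN_zero
lemma CN_A (n k : ℕ) : CN (A n k) := fun r => by
  rw [coeff_A]; exact w_nonneg n k r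

lemma chooseRel (n r : ℕ) :
    ((r : ℚ) + 1) * (n.choose (r + 1) : ℚ) = ((n : ℚ) - r) * (n.choose r : ℚ) := by
  rcases le_or_gt r n with h | h
  · have h2 := Nat.choose_succ_right_eq n r
    have hc : ((n.choose (r + 1) * (r + 1) : ℕ) : ℚ) = ((n.choose r * (n - r) : ℕ) : ℚ) := by
      exact_mod_cast congrArg (Nat.cast (R := ℚ)) h2
    push_cast [Nat.cast_sub h] at hc
    linarith [hc]
  · have h1 : n.choose (r + 1) = 0 := Nat.choose_eq_zero_of_lt (by omega)
    have h2 : n.choose r = 0 := Nat.choose_eq_zero_of_lt h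
    simp [h1, h2]

lemma pascal (n r : ℕ) :
    (((n + 1).choose (r + 1) : ℕ) : ℚ) = (n.choose r : ℚ) + (n.choose (r + 1) : ℚ) := by
  rw [Nat.choose_succ_succ]
  push_cast
  ring

lemma wrec11 (n k j : ℕ) : (n : ℚ) * w (n + 1) (k + 1) (j + 1)
    = ((n : ℚ) + 1) * (w n k (j + 1) + w n (k + 1) (j + 1) + w n (k + 1) j + w n (k + 2) j) := by
  have hb := chooseRel n j
  have hc1 := chooseRel n (k + j + 1)
  rw [show k + j + 1 + 1 = k + j + 2 from by omega] at hc1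
  push_cast at hc1
  have hc2 := chooseRel n (k + j + 2)
  rw [show k + j + 2 + 1 = k + j + 3 from by omega] at hc2
  push_cast at hc2
  have hP1 := pascal n j
  have hP2 : (((n + 1).choose (k + j + 2) : ℕ) : ℚ)
      = (n.choose (k + j + 1) : ℚ) + (n.choose (k + j + 2) : ℚ) := by
    have := pascal n (k + j + 1)
    rwa [show k + j + 1 + 1 = k + j + 2 from by omega] at this
  have hP3 : (((n + 1).choose (k + j + 3) : ℕ) : ℚ)
      = (n.choose (k + j + 2) : ℚ) + (n.choose (k + j + 3) : ℚ) := by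
    have := pascal n (k + j + 2)
    rwa [show k + j + 2 + 1 = k + j + 3 from by omega] at this
  have key : ((j : ℚ) + 1) * ((n : ℚ) * w (n + 1) (k + 1) (j + 1))
      = ((j : ℚ) + 1) * (((n : ℚ) + 1) *
        (w n k (j + 1) + w n (k + 1) (j + 1) + w n (k + 1) j + w n (k + 2) j)) := by
    simp only [w]
    simp only [show k + 1 + (j + 1) = k + j + 2 from by omega,
      show k + (j + 1) = k + j + 1 from by omega,
      show k + 1 + j = k + j + 1 from by omega,
      show k + 2 + j = k + j + 2 from by omega,
      show k + j + 1 + 1 = k + j + 2 from by omega,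
      show k + j + 2 + 1 = k + j + 3 from by omega]
    rw [hP1, hP2, hP3]
    push_cast
    linear_combination
      (((n : ℚ) - k) * (n.choose (k + j + 1) : ℚ)
          + ((n : ℚ) - 2 * k - 2) * (n.choose (k + j + 2) : ℚ)
          - ((k : ℚ) + 2) * (n.choose (k + j + 3) : ℚ)) * hb
        - ((n : ℚ) + 1) * (n.choose j : ℚ) * hc1
        - ((n : ℚ) + 1) * (n.choose j : ℚ) * hc2
  exact mul_left_cancel₀ (by positivity) key

lemma wrec10 (n k : ℕ) : (n : ℚ) * w (n + 1) (k + 1) 0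
    = ((n : ℚ) + 1) * (w n k 0 + w n (k + 1) 0) := by
  have hr1 := chooseRel n k
  have hr2 := chooseRel n (k + 1)
  rw [show k + 1 + 1 = k + 2 from by omega] at hr2
  push_cast at hr2
  simp only [w]
  simp only [show k + 1 + 0 = k + 1 from by omega, show k + 0 = k from by omega,
    show k + 1 + 1 = k + 2 from by omega]
  rw [Nat.choose_zero_right, Nat.choose_zero_right]
  have hP1 := pascal n k
  have hP2 : (((n + 1).choose (k + 2) : ℕ) : ℚ)
      = (n.choose (k + 1) : ℚ) + (n.choose (k + 2) : ℚ) := by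
    have := pascal n (k + 1)
    rwa [show k + 1 + 1 = k + 2 from by omega] at this
  rw [hP1, hP2]
  push_cast
  linear_combination (-1 : ℚ) * hr1 - hr2

lemma wrec01 (n j : ℕ) : (n : ℚ) * w (n + 1) 0 (j + 1)
    = ((n : ℚ) + 1) * (w n 0 (j + 1) + w n 1 j) := by
  have hb1 := chooseRel n j
  have hb2 := chooseRel n (j + 1)
  rw [show j + 1 + 1 = j + 2 from by omega] at hb2
  push_cast at hb2
  have hP1 := pascal n j
  have hP2 : (((n + 1).choose (j + 2) : ℕ) : ℚ)
      = (n.choose (j + 1) : ℚ) + (n.choose (j + 2) : ℚ) := by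
    have := pascal n (j + 1)
    rwa [show j + 1 + 1 = j + 2 from by omega] at this
  have key : ((j : ℚ) + 2) * ((n : ℚ) * w (n + 1) 0 (j + 1))
      = ((j : ℚ) + 2) * (((n : ℚ) + 1) * (w n 0 (j + 1) + w n 1 j)) := by
    simp only [w]
    simp only [show (0 : ℕ) + (j + 1) = j + 1 from by omega,
      show (1 : ℕ) + j = j + 1 from by omega,
      show j + 1 + 1 = j + 2 from by omega]
    rw [hP1, hP2]
    push_cast
    linear_combination
      (-((n : ℚ) + 2) * (n.choose j : ℚ) - (n.choose (j + 1) : ℚ)) * hb2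
        + ((n : ℚ) + 1) * (n.choose (j + 1) : ℚ) * hb1
  exact mul_left_cancel₀ (by positivity) key

lemma wrec00 (n : ℕ) : (n : ℚ) * w (n + 1) 0 0 = ((n : ℚ) + 1) * w n 0 0 := by
  simp only [w]
  simp [Nat.choose_one_right]
  push_cast
  ring

/-- Diagonal entries of the transfer matrix. -/
noncomputable def Bq (k : ℕ) : Polynomial ℚ := if k = 0 then 1 else 1 + X

/-- The tridiagonal transfer matrix (as used acting on rows). -/
noncomputable def Mc (i k : ℕ) : Polynomial ℚ :=
  (if i + 1 = k then 1 else 0) + (if i = k then Bq k else 0) + (if i = k + 1 then X else 0)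

lemma CN_Bq (k : ℕ) : CN (Bq k) := by
  unfold Bq; split
  · exact CN_one
  · exact CN_add CN_one CN_X

lemma CN_Mc (i k : ℕ) : CN (Mc i k) :=
  CN_add (CN_add (CN_ite _ CN_one) (CN_ite _ (CN_Bq k))) (CN_ite _ CN_X)

lemma Arec0 (n : ℕ) :
    C (n : ℚ) * A (n + 1) 0 = C ((n : ℚ) + 1) * (A n 0 + X * A n 1) := by
  ext r
  rcases r with _ | r
  · simp only [coeff_C_mul, coeff_add, mul_coeff_zero, coeff_C_zero, coeff_X_zero, zero_mul,
      add_zero, coeff_A]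
    linear_combination wrec00 n
  · simp only [coeff_C_mul, coeff_add, coeff_X_mul, coeff_A]
    linear_combination wrec01 n r

lemma ArecS (n k : ℕ) :
    C (n : ℚ) * A (n + 1) (k + 1)
      = C ((n : ℚ) + 1) * (A n k + (A n (k + 1) + X * A n (k + 1)) + X * A n (k + 2)) := by
  ext r
  rcases r with _ | r
  · simp only [coeff_C_mul, coeff_add, mul_coeff_zero, coeff_C_zero, coeff_X_zero, zero_mul,
      add_zero, coeff_A]
    linear_combination wrec10 n k
  · simp only [coeff_C_mul, coeff_add, coeff_X_mul, coeff_A]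
    linear_combination wrec11 n k r

lemma sum_Mc0 (u : ℕ → Polynomial ℚ) {N : ℕ} (h : 2 ≤ N) :
    ∑ i ∈ range N, Mc i 0 * u i = u 0 + X * u 1 := by
  have e : ∀ i, Mc i 0 * u i
      = (if i = 0 then u i else 0) + (if i = 1 then X * u i else 0) := by
    intro i
    have h1 : ¬ (i + 1 = 0) := by omega
    by_cases h2 : i = 0
    · subst h2
      simp [Mc, Bq]
    · by_cases h3 : i = 1
      · subst h3
        simp [Mc, Bq]
      · have h4 : ¬ (i = 0 + 1) := by omega
        simp [Mc, h1, h2, h4, h3]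
  rw [Finset.sum_congr rfl fun i _ => e i, Finset.sum_add_distrib,
    Finset.sum_ite_eq' (range N) 0 (fun i => u i),
    Finset.sum_ite_eq' (range N) 1 (fun i => X * u i)]
  have m0 : (0 : ℕ) ∈ range N := by simp; omega
  have m1 : (1 : ℕ) ∈ range N := by simp; omega
  rw [if_pos m0, if_pos m1]

lemma sum_McS (u : ℕ → Polynomial ℚ) {N k : ℕ} (h : k + 3 ≤ N) :
    ∑ i ∈ range N, Mc i (k + 1) * u i
      = u k + (u (k + 1) + X * u (k + 1)) + X * u (k + 2) := by
  have e : ∀ i, Mc i (k + 1) * u i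
      = (if i = k then u i else 0) + (if i = k + 1 then u i + X * u i else 0)
          + (if i = k + 2 then X * u i else 0) := by
    intro i
    by_cases h2 : i = k
    · have v : Mc i (k + 1) = 1 := by
        simp only [Mc]
        rw [if_pos (show i + 1 = k + 1 from by omega), if_neg (show ¬ i = k + 1 from by omega),
          if_neg (show ¬ i = k + 1 + 1 from by omega)]
        ring
      rw [v, one_mul, if_pos h2, if_neg (show ¬ i = k + 1 from by omega),
        if_neg (show ¬ i = k + 2 from by omega)]
      simp
    · by_cases h3 : i = k + 1
      · have v : Mc i (k + 1) = 1 + X := by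
          simp only [Mc]
          rw [if_neg (show ¬ i + 1 = k + 1 from by omega), if_pos h3,
            if_neg (show ¬ i = k + 1 + 1 from by omega)]
          have hb : Bq (k + 1) = 1 + X := by simp [Bq]
          rw [hb]
          ring
        rw [v, if_neg h2, if_pos h3, if_neg (show ¬ i = k + 2 from by omega)]
        ring
      · by_cases h4 : i = k + 2
        · have v : Mc i (k + 1) = X := by
            simp only [Mc]
            rw [if_neg (show ¬ i + 1 = k + 1 from by omega), if_neg h3,
              if_pos (show i = k + 1 + 1 from by omega)]
            ring
          rw [v, if_neg h2, if_neg h3, if_pos h4]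
          ring
        · have v : Mc i (k + 1) = 0 := by
            simp only [Mc]
            rw [if_neg (show ¬ i + 1 = k + 1 from by omega), if_neg h3,
              if_neg (show ¬ i = k + 1 + 1 from by omega)]
            ring
          rw [v, if_neg h2, if_neg h3, if_neg h4]
          ring
  rw [Finset.sum_congr rfl fun i _ => e i]
  rw [Finset.sum_add_distrib, Finset.sum_add_distrib,
    Finset.sum_ite_eq' (range N) k (fun i => u i),
    Finset.sum_ite_eq' (range N) (k + 1) (fun i => u i + X * u i),
    Finset.sum_ite_eq' (range N) (k + 2) (fun i => X * u i)]
  have m0 : k ∈ range N := by simp; omega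
  have m1 : k + 1 ∈ range N := by simp; omega
  have m2 : k + 2 ∈ range N := by simp; omega
  rw [if_pos m0, if_pos m1, if_pos m2]

lemma Arec_sum {n k N : ℕ} (hN : n + 4 ≤ N) :
    C (n : ℚ) * A (n + 1) k = C ((n : ℚ) + 1) * ∑ i ∈ range N, Mc i k * A n i := by
  rcases k with _ | k
  · rw [sum_Mc0 (fun i => A n i) (by omega)]
    exact Arec0 n
  · rcases le_or_gt (k + 3) N with h | h
    · rw [sum_McS (fun i => A n i) h]
      exact ArecS n k
    · have hz : A (n + 1) (k + 1) = 0 := A_zero_of_klt (by omega)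
      have hzz : ∀ i ∈ range N, Mc i (k + 1) * A n i = 0 := by
        intro i hi
        rcases le_or_gt i n with h2 | h2
        · have hm : Mc i (k + 1) = 0 := by
            have c1 : ¬ (i + 1 = k + 1) := by omega
            have c2 : ¬ (i = k + 1) := by omega
            have c3 : ¬ (i = k + 1 + 1) := by omega
            simp [Mc, c1, c2, c3]
            omega
          rw [hm, zero_mul]
        · rw [A_zero_of_klt h2, mul_zero]
      rw [Finset.sum_eq_zero hzz, hz, mul_zero, mul_zero]

lemma cb (f : ℕ → ℕ → Polynomial ℚ) (u v : ℕ → Polynomial ℚ) (N k l : ℕ) :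
    (∑ i ∈ range N, f i k * u i) * (∑ j ∈ range N, f j l * v j)
      - (∑ i ∈ range N, f i l * u i) * (∑ j ∈ range N, f j k * v j)
    = ∑ p ∈ (range N ×ˢ range N).filter (fun p => p.1 < p.2),
        (f p.1 k * f p.2 l - f p.1 l * f p.2 k) * (u p.1 * v p.2 - u p.2 * v p.1) := by
  classical
  have h1 : (∑ i ∈ range N, f i k * u i) * (∑ j ∈ range N, f j l * v j)
      - (∑ i ∈ range N, f i l * u i) * (∑ j ∈ range N, f j k * v j)
      = ∑ p ∈ range N ×ˢ range N,
          (f p.1 k * f p.2 l - f p.1 l * f p.2 k) * (u p.1 * v p.2) := by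
    rw [Finset.sum_mul_sum, Finset.sum_mul_sum, Finset.sum_product,
      ← Finset.sum_sub_distrib]
    refine Finset.sum_congr rfl fun i _ => ?_
    rw [← Finset.sum_sub_distrib]
    refine Finset.sum_congr rfl fun j _ => ?_
    ring
  rw [h1, ← Finset.sum_filter_add_sum_filter_not (range N ×ˢ range N)
      (fun p => p.1 < p.2)
      (fun p => (f p.1 k * f p.2 l - f p.1 l * f p.2 k) * (u p.1 * v p.2))]
  have hsub : (range N ×ˢ range N).filter (fun p => p.2 < p.1)
      ⊆ (range N ×ˢ range N).filter (fun p => ¬ p.1 < p.2) := by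
    intro p hp
    simp only [Finset.mem_filter] at hp ⊢
    exact ⟨hp.1, by omega⟩
  have hzero : ∀ p ∈ (range N ×ˢ range N).filter (fun p => ¬ p.1 < p.2),
      p ∉ (range N ×ˢ range N).filter (fun p => p.2 < p.1) →
      (f p.1 k * f p.2 l - f p.1 l * f p.2 k) * (u p.1 * v p.2) = 0 := by
    intro p hp hnp
    simp only [Finset.mem_filter] at hp hnp
    have hpp : p.1 = p.2 := by
      by_contra hne
      exact hnp ⟨hp.1, by omega⟩
    rw [hpp]
    ring
  have h2 : ∑ p ∈ (range N ×ˢ range N).filter (fun p => ¬ p.1 < p.2),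
        (f p.1 k * f p.2 l - f p.1 l * f p.2 k) * (u p.1 * v p.2)
      = ∑ p ∈ (range N ×ˢ range N).filter (fun p => p.2 < p.1),
        (f p.1 k * f p.2 l - f p.1 l * f p.2 k) * (u p.1 * v p.2) :=
    (Finset.sum_subset hsub hzero).symm
  rw [h2]
  have h3 : ∑ p ∈ (range N ×ˢ range N).filter (fun p => p.2 < p.1),
        (f p.1 k * f p.2 l - f p.1 l * f p.2 k) * (u p.1 * v p.2)
      = ∑ p ∈ (range N ×ˢ range N).filter (fun p => p.1 < p.2),
        (f p.2 k * f p.1 l - f p.2 l * f p.1 k) * (u p.2 * v p.1) := by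
    refine Finset.sum_nbij' (fun p => p.swap) (fun p => p.swap) ?_ ?_ ?_ ?_ ?_
    · intro a ha
      simp only [Finset.mem_filter, Finset.mem_product] at ha ⊢
      exact ⟨⟨ha.1.2, ha.1.1⟩, ha.2⟩
    · intro a ha
      simp only [Finset.mem_filter, Finset.mem_product] at ha ⊢
      exact ⟨⟨ha.1.2, ha.1.1⟩, ha.2⟩
    · intro a _; exact Prod.swap_swap a
    · intro a _; exact Prod.swap_swap a
    · intro a _; rfl
  rw [h3, ← Finset.sum_add_distrib]
  refine Finset.sum_congr rfl fun p hp => ?_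
  ring

lemma CN_Mc_minor {i j k l : ℕ} (hij : i < j) (hkl : k < l) :
    CN (Mc i k * Mc j l - Mc i l * Mc j k) := by
  rcases Nat.lt_or_ge (k + 1) j with h | h
  · have hz : Mc j k = 0 := by
      have c1 : ¬ (j + 1 = k) := by omega
      have c2 : ¬ (j = k) := by omega
      have c3 : ¬ (j = k + 1) := by omega
      simp [Mc, c1, c2, c3]
    rw [hz, mul_zero, sub_zero]
    exact CN_mul (CN_Mc i k) (CN_Mc j l)
  · by_cases hil : i + 1 = l
    · have m1 : Mc i k = Bq k := by
        simp only [Mc]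
        rw [if_neg (show ¬ i + 1 = k from by omega), if_pos (show i = k from by omega),
          if_neg (show ¬ i = k + 1 from by omega)]
        ring
      have m2 : Mc j l = Bq l := by
        simp only [Mc]
        rw [if_neg (show ¬ j + 1 = l from by omega), if_pos (show j = l from by omega),
          if_neg (show ¬ j = l + 1 from by omega)]
        ring
      have m3 : Mc i l = 1 := by
        simp only [Mc]
        rw [if_pos hil, if_neg (show ¬ i = l from by omega),
          if_neg (show ¬ i = l + 1 from by omega)]
        ring
      have m4 : Mc j k = X := by
        simp only [Mc]
        rw [if_neg (show ¬ j + 1 = k from by omega), if_neg (show ¬ j = k from by omega),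
          if_pos (show j = k + 1 from by omega)]
        ring
      rw [m1, m2, m3, m4, one_mul]
      have hBl : Bq l = 1 + X := by
        have hlne : l ≠ 0 := by omega
        simp [Bq, hlne]
      rw [hBl]
      rcases Nat.eq_zero_or_pos k with rfl | hk
      · have hB0 : Bq 0 = 1 := by simp [Bq]
        rw [hB0]
        have e : (1 : Polynomial ℚ) * (1 + X) - X = 1 := by ring
        rw [e]
        exact CN_one
      · have hkne : k ≠ 0 := by omega
        have hBk : Bq k = 1 + X := by simp [Bq, hkne]
        rw [hBk]
        have e : ((1 : Polynomial ℚ) + X) * (1 + X) - X = 1 + X + X * X := by ring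
        rw [e]
        exact CN_add (CN_add CN_one CN_X) (CN_mul CN_X CN_X)
    · have hz : Mc i l = 0 := by
        have c2 : ¬ (i = l) := by omega
        have c3 : ¬ (i = l + 1) := by omega
        simp [Mc, hil, c2, c3]
      rw [hz, zero_mul, sub_zero]
      exact CN_mul (CN_Mc i k) (CN_Mc j l)

lemma A_one_zero : A 1 0 = 1 := by
  ext r
  rw [coeff_A, coeff_one]
  rcases r with _ | r
  · norm_num [w, Nat.choose_self, Nat.choose_zero_right]
  · rw [if_neg (Nat.succ_ne_zero r)]
    have h0 : Nat.choose 1 (0 + (r + 1) + 1) = 0 := Nat.choose_eq_zero_of_lt (by omega)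
    simp only [w, h0]
    norm_num

lemma A_one_one : A 1 1 = 1 := by
  ext r
  rw [coeff_A, coeff_one]
  rcases r with _ | r
  · have h0 : Nat.choose 1 (1 + 0 + 1) = 0 := Nat.choose_eq_zero_of_lt (by omega)
    norm_num [w, h0, Nat.choose_self, Nat.choose_zero_right]
  · rw [if_neg (Nat.succ_ne_zero r)]
    have h0 : Nat.choose 1 (1 + (r + 1)) = 0 := Nat.choose_eq_zero_of_lt (by omega)
    have h1 : Nat.choose 1 (1 + (r + 1) + 1) = 0 := Nat.choose_eq_zero_of_lt (by omega)
    simp only [w, h0, h1]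
    norm_num

lemma tp2_base : ∀ k l, k < l → CN (A 1 k * A 2 l - A 1 l * A 2 k) := by
  intro k l hkl
  rcases k with _ | k
  · rcases l with _ | l
    · omega
    · rcases l with _ | l
      · rw [A_one_zero, A_one_one, one_mul, one_mul]
        intro r
        rw [coeff_sub, coeff_A, coeff_A]
        have key : w 2 1 r - w 2 0 r
            = 2 * (Nat.choose 2 r : ℚ) * (Nat.choose 2 (r + 2) : ℚ) := by
          simp only [w]
          simp only [show 1 + r = r + 1 from by omega,
            show r + 1 + 1 = r + 2 from by omega,
            show 0 + r = r from by omega]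
          push_cast
          ring
        rw [key]
        positivity
      · rw [A_one_zero, one_mul, A_zero_of_klt (show 1 < l + 1 + 1 from by omega), zero_mul,
          sub_zero]
        exact CN_A 2 (l + 1 + 1)
  · rcases k with _ | k
    · rw [A_one_one, one_mul, A_zero_of_klt (show 1 < l from by omega), zero_mul, sub_zero]
      exact CN_A 2 l
    · rw [A_zero_of_klt (show 1 < k + 1 + 1 from by omega),
        A_zero_of_klt (show 1 < l from by omega), zero_mul, zero_mul, sub_zero]
      exact CN_zero

lemma tp2 : ∀ n, 1 ≤ n → ∀ k l, k < l → CN (A n k * A (n + 1) l - A n l * A (n + 1) k) := by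
  intro n
  induction n with
  | zero => intro h; omega
  | succ n ih =>
    intro _
    rcases Nat.eq_zero_or_pos n with rfl | hpos
    · exact tp2_base
    · intro k l hkl
      by_cases hl : n + 2 < l
      · have z1 : A (n + 1) l = 0 := A_zero_of_klt (by omega)
        have z2 : A (n + 1 + 1) l = 0 := A_zero_of_klt (by omega)
        rw [z1, z2, mul_zero, zero_mul, sub_zero]
        exact CN_zero
      · push_neg at hl
        have e1 := Arec_sum (n := n) (k := k) (N := n + 5) (by omega)
        have e2 := Arec_sum (n := n) (k := l) (N := n + 5) (by omega)
        have e3 := Arec_sum (n := n + 1) (k := k) (N := n + 5) (by omega)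
        have e4 := Arec_sum (n := n + 1) (k := l) (N := n + 5) (by omega)
        push_cast at e3 e4
        have hcb := cb Mc (fun i => A n i) (fun i => A (n + 1) i) (n + 5) k l
        have key : C (n : ℚ) * C ((n : ℚ) + 1) *
              (A (n + 1) k * A (n + 1 + 1) l - A (n + 1) l * A (n + 1 + 1) k)
            = C ((n : ℚ) + 1) * C ((n : ℚ) + 1 + 1) *
              ∑ p ∈ (range (n + 5) ×ˢ range (n + 5)).filter (fun p => p.1 < p.2),
                (Mc p.1 k * Mc p.2 l - Mc p.1 l * Mc p.2 k) *
                  (A n p.1 * A (n + 1) p.2 - A n p.2 * A (n + 1) p.1) := by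
          have h5 : C (n : ℚ) * C ((n : ℚ) + 1) *
              (A (n + 1) k * A (n + 1 + 1) l - A (n + 1) l * A (n + 1 + 1) k)
              = (C (n : ℚ) * A (n + 1) k) * (C ((n : ℚ) + 1) * A (n + 1 + 1) l)
                - (C (n : ℚ) * A (n + 1) l) * (C ((n : ℚ) + 1) * A (n + 1 + 1) k) := by
            ring
          rw [h5, e1, e2, e3, e4, ← hcb]
          ring
        intro r
        have hco := congrArg (fun p => Polynomial.coeff p r) key
        simp only [mul_assoc, coeff_C_mul] at hco
        have hQ := (CN_sum (s := (range (n + 5) ×ˢ range (n + 5)).filter (fun p => p.1 < p.2))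
          (fun p hp => CN_mul (CN_Mc_minor (Finset.mem_filter.mp hp).2 hkl)
            (ih hpos p.1 p.2 (Finset.mem_filter.mp hp).2))) r
        have hn0 : (0 : ℚ) < (n : ℚ) := by exact_mod_cast hpos
        have hpos2 : (0 : ℚ) < (n : ℚ) * ((n : ℚ) + 1) := by positivity
        by_contra hneg
        push_neg at hneg
        have hlt : (n : ℚ) * ((n : ℚ) + 1) *
            ((A (n + 1) k * A (n + 1 + 1) l - A (n + 1) l * A (n + 1 + 1) k).coeff r) < 0 :=
          mul_neg_of_pos_of_neg hpos2 hneg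
        rw [mul_assoc] at hlt
        rw [hco] at hlt
        have hge : 0 ≤ ((n : ℚ) + 1) * (((n : ℚ) + 1 + 1) *
            (∑ p ∈ (range (n + 5) ×ˢ range (n + 5)).filter (fun p => p.1 < p.2),
                (Mc p.1 k * Mc p.2 l - Mc p.1 l * Mc p.2 k) *
                  (A n p.1 * A (n + 1) p.2 - A n p.2 * A (n + 1) p.1)).coeff r) := by
          have hc1 : (0 : ℚ) ≤ (n : ℚ) + 1 := by positivity
          have hc2 : (0 : ℚ) ≤ (n : ℚ) + 1 + 1 := by positivity
          exact mul_nonneg hc1 (mul_nonneg hc2 hQ)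
        linarith

lemma nar_scaled {n : ℕ} (hn : 1 ≤ n) : C (n : ℚ) * narayanaPoly n = A n 0 := by
  have hne : n ≠ 0 := by omega
  rw [narayanaPoly, if_neg hne, A, Finset.mul_sum]
  refine Finset.sum_congr rfl fun j hj => ?_
  rw [← mul_assoc, ← C_mul]
  congr 1
  have hq : (n : ℚ) ≠ 0 := Nat.cast_ne_zero.mpr hne
  simp only [w, Nat.zero_add]
  push_cast
  field_simp
  simp

lemma main_ge2 (u : ℕ) (hu : 1 ≤ u) (r : ℕ) :
    0 ≤ (narayanaPoly (u + 2) * narayanaPoly u - narayanaPoly (u + 1) ^ 2).coeff r := by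
  have F1 : C (u : ℚ) * narayanaPoly u = A u 0 := nar_scaled hu
  have F2 : C ((u : ℚ) + 1) * narayanaPoly (u + 1) = A (u + 1) 0 := by
    have h := nar_scaled (n := u + 1) (by omega)
    push_cast at h
    exact h
  have F2' : C ((u : ℚ) + 2) * narayanaPoly (u + 2) = A (u + 2) 0 := by
    have h := nar_scaled (n := u + 2) (by omega)
    push_cast at h
    exact h
  have F3 : C (u : ℚ) * narayanaPoly (u + 1) = A u 0 + X * A u 1 := by
    have h := Arec0 u
    rw [← F2] at h
    refine mul_left_cancel₀ (Polynomial.C_ne_zero.mpr (show ((u : ℚ) + 1) ≠ 0 from by positivity)) ?_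
    linear_combination h
  have F4 : C ((u : ℚ) + 1) * narayanaPoly (u + 2) = A (u + 1) 0 + X * A (u + 1) 1 := by
    have h := Arec0 (u + 1)
    push_cast at h
    rw [show u + 1 + 1 = u + 2 from by omega] at h
    rw [show ((u : ℚ) + 1 + 1) = (u : ℚ) + 2 from by ring] at h
    rw [← F2'] at h
    refine mul_left_cancel₀ (Polynomial.C_ne_zero.mpr (show ((u : ℚ) + 2) ≠ 0 from by positivity)) ?_
    linear_combination h
  have key : C (u : ℚ) * C ((u : ℚ) + 1) *
        (narayanaPoly (u + 2) * narayanaPoly u - narayanaPoly (u + 1) ^ 2)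
      = X * (A u 0 * A (u + 1) 1 - A u 1 * A (u + 1) 0) := by
    linear_combination (C (u : ℚ) * narayanaPoly u) * F4
      + (A (u + 1) 0 + X * A (u + 1) 1) * F1
      - (C ((u : ℚ) + 1) * narayanaPoly (u + 1)) * F3
      - (A u 0 + X * A u 1) * F2
  have hQ := (CN_mul CN_X (tp2 u hu 0 1 (by omega))) r
  have hco := congrArg (fun p => Polynomial.coeff p r) key
  simp only [mul_assoc, coeff_C_mul] at hco
  have hn0 : (0 : ℚ) < (u : ℚ) := by exact_mod_cast hu
  have hpos2 : (0 : ℚ) < (u : ℚ) * ((u : ℚ) + 1) := by positivity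
  by_contra hneg
  push_neg at hneg
  have hlt : (u : ℚ) * ((u : ℚ) + 1) *
      ((narayanaPoly (u + 2) * narayanaPoly u - narayanaPoly (u + 1) ^ 2).coeff r) < 0 :=
    mul_neg_of_pos_of_neg hpos2 hneg
  rw [mul_assoc] at hlt
  rw [hco] at hlt
  linarith

end NaraAux

/-- The Narayana polynomials form a `q`-log-convex sequence: for `m ≥ 1`
every coefficient of `N_{m+1}(q) N_{m-1}(q) - N_m(q)^2` is nonnegative. -/
theorem narayana_q_log_convex (m : ℕ) (hm : 1 ≤ m) (r : ℕ) :
    0 ≤ (narayanaPoly (m + 1) * narayanaPoly (m - 1) - narayanaPoly m ^ 2).coeff r := by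
  rcases Nat.exists_eq_add_of_le hm with ⟨t, rfl⟩
  rcases t with _ | s
  · have h0 : narayanaPoly 0 = 1 := by rw [narayanaPoly, if_pos rfl]
    have h1 : narayanaPoly 1 = 1 := by
      rw [narayanaPoly, if_neg one_ne_zero]
      norm_num [Finset.sum_range_succ, show Nat.choose 1 0 = 1 from rfl,
        show Nat.choose 1 1 = 1 from rfl, show Nat.choose 1 2 = 0 from rfl]
    have h2 : narayanaPoly 2 = 1 + Polynomial.X := by
      rw [narayanaPoly, if_neg (by norm_num)]
      norm_num [Finset.sum_range_succ, show Nat.choose 2 0 = 1 from rfl,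
        show Nat.choose 2 1 = 2 from rfl, show Nat.choose 2 2 = 1 from rfl,
        show Nat.choose 2 3 = 0 from rfl]
    rw [show 1 + 0 + 1 = 2 from rfl, show 1 + 0 - 1 = 0 from rfl, show 1 + 0 = 1 from rfl]
    rw [h2, h0, h1]
    have e : (1 + Polynomial.X) * (1 : Polynomial ℚ) - 1 ^ 2 = Polynomial.X := by ring
    rw [e]
    exact NaraAux.CN_X r
  · rw [show 1 + (s + 1) + 1 = s + 1 + 2 from by omega,
      show 1 + (s + 1) - 1 = s + 1 from by omega,
      show 1 + (s + 1) = s + 1 + 1 from by omega]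
    exact NaraAux.main_ge2 (s + 1) (by omega) r
end

section
/- Let k ≥ 1 and n > 1 be integers, and write ps_n(f) for the evaluation f(1, q, q^2, …, q^{n−1}) of a symmetric polynomial f in n variables, as a polynomial in q. Then: (a) ps_n(s_{(2^k)}) = ps_{n−1}(s_{(2^k)}) + q^{n−1}·ps_{n−1}(s_{(2^{k−1},1)}) + q^{2(n−1)}·ps_{n−1}(s_{(2^{k−1})}); and (b) ps_n(s_{(2^k,1)}) = ps_{n−1}(s_{(2^k,1)}) + q^{n−1}·ps_{n−1}(s_{(2^k)} + s_{(2^{k−1},1^2)}) + q^{2(n−1)}·ps_{n−1}(s_{(2^{k−1},1)}). -/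
open MvPolynomial

/-- Semistandard Young tableaux of shape `μ` with all entries < `N`
(entries `0,…,N-1` playing the role of `1,…,N`). -/
def BddSsyt (μ : YoungDiagram) (N : ℕ) : Type :=
  {T : SemistandardYoungTableau μ // ∀ c ∈ μ.cells, T c.1 c.2 < N}

noncomputable instance (μ : YoungDiagram) (N : ℕ) : Fintype (BddSsyt μ N) :=
  Fintype.ofInjective
    (fun (T : BddSsyt μ N) (c : μ.cells) => (⟨T.1 c.1.1 c.1.2, T.2 c.1 c.2⟩ : Fin N))
    (by
      intro T₁ T₂ h
      apply Subtype.ext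
      ext i j
      by_cases hij : (i, j) ∈ μ
      · exact congrArg Fin.val (congrFun h ⟨(i, j), (YoungDiagram.mem_cells _).mpr hij⟩)
      · rw [T₁.1.zeros hij, T₂.1.zeros hij])

/-- The Schur polynomial of a Young diagram `μ` in `N` variables, defined as the
generating function of semistandard Young tableaux of shape `μ` with entries in `{0,…,N-1}`. -/
noncomputable def schurYD (N : ℕ) (μ : YoungDiagram) : MvPolynomial (Fin N) ℤ :=
  ∑ T : BddSsyt μ N, ∏ c ∈ μ.cells.attach,
    X (⟨T.1 c.1.1 c.1.2, T.2 c.1 c.2⟩ : Fin N)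

/-- The Young diagram whose rows are the parts of the multiset `m` (in decreasing order). -/
def ydOf (m : Multiset ℕ) : YoungDiagram :=
  YoungDiagram.ofRowLens (m.sort (· ≥ ·)) (m.pairwise_sort _).sortedGE

/-- The Schur polynomial in `N` variables of the partition with parts `m`. -/
noncomputable def schur (N : ℕ) (m : Multiset ℕ) : MvPolynomial (Fin N) ℤ :=
  schurYD N (ydOf m)

/-- The partition `(2^a, 1^b)`. -/
def twoOne (a b : ℕ) : Multiset ℕ :=
  Multiset.replicate a 2 + Multiset.replicate b 1

/-- The Schur polynomial of `(2^a, 1^b)` with integer indices, with the convention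
that it is `0` whenever `a < 0` or `b < 0`. -/
noncomputable def schurZ (N : ℕ) (a b : ℤ) : MvPolynomial (Fin N) ℤ :=
  if 0 ≤ a ∧ 0 ≤ b then schur N (twoOne a.toNat b.toNat) else 0

/-- A family of symmetric polynomials (one for each number `N` of variables) is Schur-positive
if it is a fixed nonnegative integer combination of Schur polynomials, uniformly in `N`. -/
def SchurPos (F : (N : ℕ) → MvPolynomial (Fin N) ℤ) : Prop :=
  ∃ c : Multiset ℕ →₀ ℕ, ∀ N : ℕ, 1 ≤ N →
    F N = ∑ μ ∈ c.support, (c μ) • schur N μ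

def SchurNeg (F : (N : ℕ) → MvPolynomial (Fin N) ℤ) : Prop :=
  SchurPos (fun N => -F N)

/-- `μ ∪ 4^a ∪ (3,1)^b ∪ (2,2)^c` as a multiset of parts. -/
def qForm (μ : Multiset ℕ) (t : ℕ × ℕ × ℕ) : Multiset ℕ :=
  μ + Multiset.replicate t.1 4 + Multiset.replicate t.2.1 3
    + Multiset.replicate t.2.1 1 + Multiset.replicate (2 * t.2.2) 2

/-- The set `Q_μ(M)` of all partitions of `M` of the form `μ ∪ 4^a ∪ (3,1)^b ∪ (2,2)^c`. -/
def Qset (μ : Multiset ℕ) (M : ℕ) : Finset (Multiset ℕ) :=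
  Finset.image (qForm μ)
    ((Finset.range (M + 1) ×ˢ Finset.range (M + 1) ×ˢ Finset.range (M + 1)).filter
      (fun t => (qForm μ t).sum = M))

/-- The principal specialization `ps_n(f) = f(1, q, q^2, …, q^{n-1})` of a symmetric
polynomial in `n` variables, as a polynomial in `q`. -/
noncomputable def psn (n : ℕ) (f : MvPolynomial (Fin n) ℤ) : Polynomial ℤ :=
  MvPolynomial.aeval (fun i : Fin n => (Polynomial.X : Polynomial ℤ) ^ (i : ℕ)) f

def wt {μ : YoungDiagram} (T : SemistandardYoungTableau μ) : ℕ :=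
  ∑ c ∈ μ.cells, T c.1 c.2

def restrictT {μ' μ : YoungDiagram} (hsub : ∀ i j, (i, j) ∈ μ' → (i, j) ∈ μ)
    (T : SemistandardYoungTableau μ) : SemistandardYoungTableau μ' where
  entry i j := if (i, j) ∈ μ' then T i j else 0
  row_weak' := by
    intro i j1 j2 hj hc
    rw [if_pos hc, if_pos (μ'.up_left_mem le_rfl hj.le hc)]
    exact T.row_weak hj (hsub _ _ hc)
  col_strict' := by
    intro i1 i2 j hi hc
    rw [if_pos hc, if_pos (μ'.up_left_mem hi.le le_rfl hc)]
    exact T.col_strict hi (hsub _ _ hc)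
  zeros' := by intro i j hc; rw [if_neg hc]

theorem restrictT_apply {μ' μ : YoungDiagram} (hsub : ∀ i j, (i, j) ∈ μ' → (i, j) ∈ μ)
    (T : SemistandardYoungTableau μ) (i j : ℕ) :
    restrictT hsub T i j = if (i, j) ∈ μ' then T i j else 0 := rfl

def extendT {μ' μ : YoungDiagram} (hsub : ∀ i j, (i, j) ∈ μ' → (i, j) ∈ μ)
    (hcol : ∀ i1 i2 j, i1 < i2 → (i2, j) ∈ μ → (i2, j) ∉ μ' → (i1, j) ∈ μ → (i1, j) ∈ μ')
    (N : ℕ) (T : SemistandardYoungTableau μ') (hv : ∀ i j, (i, j) ∈ μ' → T i j < N) :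
    SemistandardYoungTableau μ where
  entry i j := if (i, j) ∈ μ ∧ (i, j) ∉ μ' then N else T i j
  row_weak' := by
    intro i j1 j2 hj hc2
    by_cases h2 : (i, j2) ∈ μ'
    · rw [if_neg (fun h => h.2 (μ'.up_left_mem le_rfl hj.le h2)), if_neg (fun h => h.2 h2)]
      exact T.row_weak hj h2
    · by_cases h1 : (i, j1) ∈ μ'
      · rw [if_neg (fun h => h.2 h1), if_pos ⟨hc2, h2⟩]
        exact (hv _ _ h1).le
      · rw [if_pos ⟨μ.up_left_mem le_rfl hj.le hc2, h1⟩, if_pos ⟨hc2, h2⟩]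
  col_strict' := by
    intro i1 i2 j hi hc2
    by_cases h2 : (i2, j) ∈ μ'
    · rw [if_neg (fun h => h.2 (μ'.up_left_mem hi.le le_rfl h2)), if_neg (fun h => h.2 h2)]
      exact T.col_strict hi h2
    · have h1 : (i1, j) ∈ μ := μ.up_left_mem hi.le le_rfl hc2
      have h1' : (i1, j) ∈ μ' := hcol i1 i2 j hi hc2 h2 h1
      rw [if_neg (fun h => h.2 h1'), if_pos ⟨hc2, h2⟩]
      exact hv _ _ h1'
  zeros' := by
    intro i j hc
    rw [if_neg (fun h => hc h.1)]
    exact T.zeros fun h => hc (hsub _ _ h)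

theorem extendT_apply {μ' μ : YoungDiagram} (hsub : ∀ i j, (i, j) ∈ μ' → (i, j) ∈ μ)
    (hcol : ∀ i1 i2 j, i1 < i2 → (i2, j) ∈ μ → (i2, j) ∉ μ' → (i1, j) ∈ μ → (i1, j) ∈ μ')
    (N : ℕ) (T : SemistandardYoungTableau μ') (hv : ∀ i j, (i, j) ∈ μ' → T i j < N) (i j : ℕ) :
    extendT hsub hcol N T hv i j = if (i, j) ∈ μ ∧ (i, j) ∉ μ' then N else T i j := rfl


def resB {μ' μ : YoungDiagram} {N : ℕ} (hsub : ∀ i j, (i, j) ∈ μ' → (i, j) ∈ μ)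
    (T : BddSsyt μ (N + 1))
    (hT : ∀ i j, (i, j) ∈ μ → (T.1 i j = N ↔ (i, j) ∉ μ')) : BddSsyt μ' N := by
  refine ⟨restrictT hsub T.1, ?_⟩
  rintro ⟨a, b⟩ hc
  rw [YoungDiagram.mem_cells] at hc
  show restrictT hsub T.1 a b < N
  rw [restrictT_apply, if_pos hc]
  have h1 : T.1 a b < N + 1 := T.2 (a, b) ((YoungDiagram.mem_cells _).mpr (hsub a b hc))
  have h2 : T.1 a b ≠ N := fun h => (hT a b (hsub a b hc)).mp h hc
  omega

theorem resB_apply {μ' μ : YoungDiagram} {N : ℕ} (hsub : ∀ i j, (i, j) ∈ μ' → (i, j) ∈ μ)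
    (T : BddSsyt μ (N + 1)) (hT) (a b : ℕ) :
    (resB hsub T hT : BddSsyt μ' N).1 a b = if (a, b) ∈ μ' then T.1 a b else 0 := rfl

def extB {μ' μ : YoungDiagram} {N : ℕ} (hsub : ∀ i j, (i, j) ∈ μ' → (i, j) ∈ μ)
    (hcol : ∀ i1 i2 j, i1 < i2 → (i2, j) ∈ μ → (i2, j) ∉ μ' → (i1, j) ∈ μ → (i1, j) ∈ μ')
    (T' : BddSsyt μ' N) : BddSsyt μ (N + 1) := by
  refine ⟨extendT hsub hcol N T'.1
    (fun i j h => T'.2 (i, j) ((YoungDiagram.mem_cells _).mpr h)), ?_⟩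
  rintro ⟨a, b⟩ hc
  rw [YoungDiagram.mem_cells] at hc
  show extendT hsub hcol N T'.1 _ a b < N + 1
  rw [extendT_apply]
  split_ifs with h
  · omega
  · by_cases h' : (a, b) ∈ μ'
    · have hb : T'.1 a b < N := T'.2 (a, b) ((YoungDiagram.mem_cells _).mpr h')
      omega
    · rw [T'.1.zeros h']
      omega

theorem extB_apply {μ' μ : YoungDiagram} {N : ℕ} (hsub : ∀ i j, (i, j) ∈ μ' → (i, j) ∈ μ)
    (hcol : ∀ i1 i2 j, i1 < i2 → (i2, j) ∈ μ → (i2, j) ∉ μ' → (i1, j) ∈ μ → (i1, j) ∈ μ')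
    (T' : BddSsyt μ' N) (a b : ℕ) :
    (extB hsub hcol T').1 a b = if (a, b) ∈ μ ∧ (a, b) ∉ μ' then N else T'.1 a b := rfl

theorem transfer {μ' μ : YoungDiagram} {N r : ℕ}
    (hsub : ∀ i j, (i, j) ∈ μ' → (i, j) ∈ μ)
    (hcol : ∀ i1 i2 j, i1 < i2 → (i2, j) ∈ μ → (i2, j) ∉ μ' → (i1, j) ∈ μ → (i1, j) ∈ μ')
    (hcard : (μ.cells \ μ'.cells).card = r)
    (P : BddSsyt μ (N + 1) → Prop) [DecidablePred P]
    (hP : ∀ T : BddSsyt μ (N + 1), P T ↔ ∀ i j, (i, j) ∈ μ → (T.1 i j = N ↔ (i, j) ∉ μ')) :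
    ∑ T ∈ Finset.univ.filter P, (Polynomial.X : Polynomial ℤ) ^ wt T.1
      = Polynomial.X ^ (r * N) * ∑ T : BddSsyt μ' N, Polynomial.X ^ wt T.1 := by
  have hsub' : μ'.cells ⊆ μ.cells := by
    intro c hc
    rw [YoungDiagram.mem_cells] at *
    exact hsub c.1 c.2 hc
  rw [Finset.mul_sum]
  refine Finset.sum_bij'
    (fun T hT => resB hsub T ((hP T).mp (Finset.mem_filter.mp hT).2))
    (fun T' _ => extB hsub hcol T') (fun T hT => Finset.mem_univ _) ?_ ?_ ?_ ?_
  · -- backward lands in filter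
    intro T' _
    rw [Finset.mem_filter]
    refine ⟨Finset.mem_univ _, (hP _).mpr ?_⟩
    intro a b hab
    rw [extB_apply]
    by_cases h' : (a, b) ∈ μ'
    · rw [if_neg (fun h => h.2 h')]
      have hb : T'.1 a b < N := T'.2 (a, b) ((YoungDiagram.mem_cells _).mpr h')
      constructor
      · intro h; omega
      · intro h; exact absurd h' h
    · rw [if_pos ⟨hab, h'⟩]
      simp [h']
  · -- left inverse
    intro T hT
    apply Subtype.ext
    apply SemistandardYoungTableau.ext
    intro a b
    rw [extB_apply]
    by_cases h' : (a, b) ∈ μ'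
    · rw [if_neg (fun h => h.2 h'), resB_apply, if_pos h']
    · by_cases h : (a, b) ∈ μ
      · rw [if_pos ⟨h, h'⟩]
        exact ((((hP T).mp (Finset.mem_filter.mp hT).2) a b h).mpr h').symm
      · rw [if_neg (fun hh => h hh.1), resB_apply, if_neg h']
        exact (T.1.zeros h).symm
  · -- right inverse
    intro T' hT'
    apply Subtype.ext
    apply SemistandardYoungTableau.ext
    intro a b
    rw [resB_apply]
    by_cases h' : (a, b) ∈ μ'
    · rw [if_pos h', extB_apply, if_neg (fun h => h.2 h')]
    · rw [if_neg h']
      exact (T'.1.zeros h').symm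
  · -- weights
    intro T hT
    rw [← pow_add]
    congr 1
    have key : wt T.1 = r * N + wt (resB hsub T ((hP T).mp (Finset.mem_filter.mp hT).2) : BddSsyt μ' N).1 := by
      rw [wt, wt, ← Finset.sum_sdiff hsub']
      congr 1
      · rw [Finset.sum_congr rfl (g := fun _ => N), Finset.sum_const, hcard, smul_eq_mul]
        rintro ⟨a, b⟩ hc
        rw [Finset.mem_sdiff, YoungDiagram.mem_cells, YoungDiagram.mem_cells] at hc
        exact (((hP T).mp (Finset.mem_filter.mp hT).2) a b hc.1).mpr hc.2
      · refine Finset.sum_congr rfl ?_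
        rintro ⟨a, b⟩ hc
        rw [YoungDiagram.mem_cells] at hc
        show T.1 a b = _
        rw [resB_apply, if_pos hc]
    rw [key]

theorem psn_schurYD (N : ℕ) (μ : YoungDiagram) :
    psn N (schurYD N μ) = ∑ T : BddSsyt μ N, (Polynomial.X : Polynomial ℤ) ^ wt T.1 := by
  rw [psn, schurYD, map_sum]
  refine Finset.sum_congr rfl fun T _ => ?_
  rw [map_prod]
  simp only [MvPolynomial.aeval_X]
  rw [Finset.prod_pow_eq_pow_sum]
  congr 1
  rw [wt, ← Finset.sum_attach μ.cells (fun c => T.1 c.1 c.2)]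

theorem sort_twoOne (a b : ℕ) : (twoOne a b).sort (· ≥ ·) = List.replicate a 2 ++ List.replicate b 1 := by
  have h1 : (((twoOne a b).sort (· ≥ ·) : List ℕ) : Multiset ℕ) = ((List.replicate a 2 ++ List.replicate b 1 : List ℕ) : Multiset ℕ) := by
    rw [Multiset.sort_eq, ← Multiset.coe_add, Multiset.coe_replicate, Multiset.coe_replicate]; rfl
  refine List.Perm.eq_of_pairwise' (Multiset.pairwise_sort _ _) ?_ (Quotient.exact h1)
  rw [List.pairwise_append]
  refine ⟨List.pairwise_replicate.mpr (by omega), List.pairwise_replicate.mpr (by omega), ?_⟩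
  intro x hx y hy
  simp only [List.eq_of_mem_replicate hx, List.eq_of_mem_replicate hy]
  omega

theorem getElem_rep_rep (a b i : ℕ) (h : i < (List.replicate a 2 ++ List.replicate b (1:ℕ)).length) :
    (List.replicate a 2 ++ List.replicate b 1)[i] = if i < a then 2 else 1 := by
  by_cases hia : i < a
  · rw [List.getElem_append_left (by simpa), List.getElem_replicate, if_pos hia]
  · rw [List.getElem_append_right (by simp; omega), List.getElem_replicate, if_neg hia]

theorem mem_twoOne {a b i j : ℕ} :
    (i, j) ∈ ydOf (twoOne a b) ↔ (j = 0 ∧ i < a + b) ∨ (j = 1 ∧ i < a) := by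
  rw [ydOf, YoungDiagram.mem_ofRowLens]
  simp only [sort_twoOne, List.length_append, List.length_replicate]
  constructor
  · rintro ⟨h, hj⟩
    rw [getElem_rep_rep] at hj
    split_ifs at hj <;> omega
  · rintro (⟨rfl, hi⟩ | ⟨rfl, hi⟩) <;> refine ⟨by omega, ?_⟩ <;> rw [getElem_rep_rep] <;>
      (split_ifs <;> omega)

theorem partA (m N : ℕ) :
    (∑ T : BddSsyt (ydOf (twoOne (m + 1) 0)) (N + 1), (Polynomial.X : Polynomial ℤ) ^ wt T.1)
      = (∑ T : BddSsyt (ydOf (twoOne (m + 1) 0)) N, (Polynomial.X : Polynomial ℤ) ^ wt T.1)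
        + Polynomial.X ^ N *
            ∑ T : BddSsyt (ydOf (twoOne m 1)) N, (Polynomial.X : Polynomial ℤ) ^ wt T.1
        + Polynomial.X ^ (2 * N) *
            ∑ T : BddSsyt (ydOf (twoOne m 0)) N, (Polynomial.X : Polynomial ℤ) ^ wt T.1 := by
  classical
  set μ := ydOf (twoOne (m + 1) 0) with hμdef
  have hmemμ : ∀ i j, (i, j) ∈ μ ↔ (j = 0 ∧ i < m + 1) ∨ (j = 1 ∧ i < m + 1) := by
    intro i j
    rw [hμdef, mem_twoOne]
  have hmemB : ∀ i j, (i, j) ∈ ydOf (twoOne m 1) ↔ (j = 0 ∧ i < m + 1) ∨ (j = 1 ∧ i < m) := by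
    intro i j; rw [mem_twoOne]
  have hmemC : ∀ i j, (i, j) ∈ ydOf (twoOne m 0) ↔ (j = 0 ∧ i < m) ∨ (j = 1 ∧ i < m) := by
    intro i j; rw [mem_twoOne]; omega
  have hm1 : (m, 1) ∈ μ := (hmemμ m 1).mpr (by omega)
  have hm0 : (m, 0) ∈ μ := (hmemμ m 0).mpr (by omega)
  -- the three transfers
  have hA : ∑ T ∈ Finset.univ.filter (fun T : BddSsyt μ (N + 1) => ¬T.1 m 1 = N),
      (Polynomial.X : Polynomial ℤ) ^ wt T.1
      = Polynomial.X ^ (0 * N) *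
          ∑ T : BddSsyt (ydOf (twoOne (m + 1) 0)) N, (Polynomial.X : Polynomial ℤ) ^ wt T.1 := by
    refine transfer (fun i j h => h) (fun i1 i2 j _ hmem hnot _ => absurd hmem hnot) ?_ _ ?_
    · rw [Finset.sdiff_self, Finset.card_empty]
    · intro T
      constructor
      · intro hq i j hij
        have hj : j ≤ 1 ∧ i ≤ m := by have := (hmemμ i j).mp hij; omega
        have h2 : (m, j) ∈ μ := (hmemμ m j).mpr (by omega)
        have c1 : T.1 i j ≤ T.1 m j := T.1.col_weak hj.2 h2
        have c2 : T.1 m j ≤ T.1 m 1 := T.1.row_weak_of_le hj.1 hm1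
        have c3 : T.1 m 1 < N + 1 := T.2 (m, 1) ((YoungDiagram.mem_cells _).mpr hm1)
        exact iff_of_false (by omega) (fun hh => hh hij)
      · intro h hq
        exact (h m 1 hm1).mp hq hm1
  have hB : ∑ T ∈ Finset.univ.filter
        (fun T : BddSsyt μ (N + 1) => T.1 m 1 = N ∧ ¬T.1 m 0 = N),
      (Polynomial.X : Polynomial ℤ) ^ wt T.1
      = Polynomial.X ^ (1 * N) *
          ∑ T : BddSsyt (ydOf (twoOne m 1)) N, (Polynomial.X : Polynomial ℤ) ^ wt T.1 := by
    refine transfer ?_ ?_ ?_ _ ?_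
    · intro i j h
      rw [hmemB] at h
      exact (hmemμ i j).mpr (by omega)
    · intro i1 i2 j h12 h2 h2' h1
      rw [hmemμ] at h2 h1
      rw [hmemB] at h2' ⊢
      omega
    · have : μ.cells \ (ydOf (twoOne m 1)).cells = {(m, 1)} := by
        ext ⟨i, j⟩
        simp only [Finset.mem_sdiff, YoungDiagram.mem_cells, Finset.mem_singleton,
          hmemμ, hmemB, Prod.mk.injEq]
        omega
      rw [this, Finset.card_singleton]
    · intro T
      constructor
      · rintro ⟨hq1, hq2⟩ i j hij
        have hj : j ≤ 1 ∧ i ≤ m := by have := (hmemμ i j).mp hij; omega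
        by_cases h' : (i, j) ∈ ydOf (twoOne m 1)
        · have hlt : T.1 i j < N := by
            have hm := (hmemB i j).mp h'
            rcases hm with ⟨rfl, hi⟩ | ⟨rfl, hi⟩
            · have c1 : T.1 i 0 ≤ T.1 m 0 := T.1.col_weak (by omega) hm0
              have c3 : T.1 m 0 < N + 1 := T.2 (m, 0) ((YoungDiagram.mem_cells _).mpr hm0)
              omega
            · have c1 : T.1 i 1 < T.1 m 1 := T.1.col_strict hi hm1
              omega
          exact iff_of_false (by omega) (fun hh => hh h')
        · have hij' : i = m ∧ j = 1 := by
            have h1 := (hmemμ i j).mp hij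
            rw [hmemB] at h'
            omega
          obtain ⟨rfl, rfl⟩ := hij'
          exact iff_of_true hq1 h'
      · intro h
        constructor
        · refine (h m 1 hm1).mpr ?_
          rw [hmemB]
          omega
        · intro hq
          have := (h m 0 hm0).mp hq
          rw [hmemB] at this
          omega
  have hC : ∑ T ∈ Finset.univ.filter
        (fun T : BddSsyt μ (N + 1) => T.1 m 1 = N ∧ T.1 m 0 = N),
      (Polynomial.X : Polynomial ℤ) ^ wt T.1
      = Polynomial.X ^ (2 * N) *
          ∑ T : BddSsyt (ydOf (twoOne m 0)) N, (Polynomial.X : Polynomial ℤ) ^ wt T.1 := by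
    refine transfer ?_ ?_ ?_ _ ?_
    · intro i j h
      rw [hmemC] at h
      exact (hmemμ i j).mpr (by omega)
    · intro i1 i2 j h12 h2 h2' h1
      rw [hmemμ] at h2 h1
      rw [hmemC] at h2' ⊢
      omega
    · have : μ.cells \ (ydOf (twoOne m 0)).cells = {(m, 0), (m, 1)} := by
        ext ⟨i, j⟩
        simp only [Finset.mem_sdiff, YoungDiagram.mem_cells, Finset.mem_insert,
          Finset.mem_singleton, hmemμ, hmemC, Prod.mk.injEq]
        omega
      rw [this]
      rw [Finset.card_insert_of_notMem (by simp), Finset.card_singleton]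
    · intro T
      constructor
      · rintro ⟨hq1, hq2⟩ i j hij
        have hj : j ≤ 1 ∧ i ≤ m := by have := (hmemμ i j).mp hij; omega
        by_cases h' : (i, j) ∈ ydOf (twoOne m 0)
        · have hlt : T.1 i j < N := by
            have hm := (hmemC i j).mp h'
            rcases hm with ⟨rfl, hi⟩ | ⟨rfl, hi⟩
            · have c1 : T.1 i 0 < T.1 m 0 := T.1.col_strict hi hm0
              omega
            · have c1 : T.1 i 1 < T.1 m 1 := T.1.col_strict hi hm1
              omega
          exact iff_of_false (by omega) (fun hh => hh h')
        · have hij' : i = m := by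
            have h1 := (hmemμ i j).mp hij
            rw [hmemC] at h'
            omega
          refine iff_of_true ?_ h'
          rcases (hmemμ i j).mp hij with ⟨rfl, _⟩ | ⟨rfl, _⟩
          · rw [hij']; exact hq2
          · rw [hij']; exact hq1
      · intro h
        constructor
        · refine (h m 1 hm1).mpr ?_
          rw [hmemC]; omega
        · refine (h m 0 hm0).mpr ?_
          rw [hmemC]; omega
  rw [← Finset.sum_filter_add_sum_filter_not Finset.univ
      (fun T : BddSsyt μ (N + 1) => T.1 m 1 = N)]
  rw [← Finset.sum_filter_add_sum_filter_not
      (Finset.univ.filter (fun T : BddSsyt μ (N + 1) => T.1 m 1 = N))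
      (fun T : BddSsyt μ (N + 1) => T.1 m 0 = N)]
  rw [Finset.filter_filter, Finset.filter_filter]
  rw [hA, hB, hC]
  ring

theorem partB (m N : ℕ) :
    (∑ T : BddSsyt (ydOf (twoOne (m + 1) 1)) (N + 1), (Polynomial.X : Polynomial ℤ) ^ wt T.1)
      = (∑ T : BddSsyt (ydOf (twoOne (m + 1) 1)) N, (Polynomial.X : Polynomial ℤ) ^ wt T.1)
        + Polynomial.X ^ N *
            ((∑ T : BddSsyt (ydOf (twoOne (m + 1) 0)) N, (Polynomial.X : Polynomial ℤ) ^ wt T.1)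
              + ∑ T : BddSsyt (ydOf (twoOne m 2)) N, (Polynomial.X : Polynomial ℤ) ^ wt T.1)
        + Polynomial.X ^ (2 * N) *
            ∑ T : BddSsyt (ydOf (twoOne m 1)) N, (Polynomial.X : Polynomial ℤ) ^ wt T.1 := by
  classical
  set μ := ydOf (twoOne (m + 1) 1) with hμdef
  have hmemμ : ∀ i j, (i, j) ∈ μ ↔ (j = 0 ∧ i < m + 2) ∨ (j = 1 ∧ i < m + 1) := by
    intro i j; rw [hμdef, mem_twoOne]
  have hmemB1 : ∀ i j, (i, j) ∈ ydOf (twoOne (m + 1) 0) ↔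
      (j = 0 ∧ i < m + 1) ∨ (j = 1 ∧ i < m + 1) := by
    intro i j; rw [mem_twoOne]
  have hmemB2 : ∀ i j, (i, j) ∈ ydOf (twoOne m 2) ↔ (j = 0 ∧ i < m + 2) ∨ (j = 1 ∧ i < m) := by
    intro i j; rw [mem_twoOne]
  have hmemC : ∀ i j, (i, j) ∈ ydOf (twoOne m 1) ↔ (j = 0 ∧ i < m + 1) ∨ (j = 1 ∧ i < m) := by
    intro i j; rw [mem_twoOne]
  have hm1 : (m, 1) ∈ μ := (hmemμ m 1).mpr (by omega)
  have hm0 : ((m : ℕ) + 1, (0 : ℕ)) ∈ μ := (hmemμ (m + 1) 0).mpr (by omega)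
  have hA : ∑ T ∈ Finset.univ.filter
        (fun T : BddSsyt μ (N + 1) => ¬T.1 m 1 = N ∧ ¬T.1 (m + 1) 0 = N),
      (Polynomial.X : Polynomial ℤ) ^ wt T.1
      = Polynomial.X ^ (0 * N) *
          ∑ T : BddSsyt (ydOf (twoOne (m + 1) 1)) N, (Polynomial.X : Polynomial ℤ) ^ wt T.1 := by
    refine transfer (fun i j h => h) (fun i1 i2 j _ hmem hnot _ => absurd hmem hnot) ?_ _ ?_
    · rw [Finset.sdiff_self, Finset.card_empty]
    · intro T
      constructor
      · rintro ⟨hq2, hq1⟩ i j hij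
        have hlt : T.1 i j < N := by
          rcases (hmemμ i j).mp hij with ⟨rfl, hi⟩ | ⟨rfl, hi⟩
          · have c1 : T.1 i 0 ≤ T.1 (m + 1) 0 := T.1.col_weak (by omega) hm0
            have c3 : T.1 (m + 1) 0 < N + 1 := T.2 _ ((YoungDiagram.mem_cells _).mpr hm0)
            omega
          · have c1 : T.1 i 1 ≤ T.1 m 1 := T.1.col_weak (by omega) hm1
            have c3 : T.1 m 1 < N + 1 := T.2 _ ((YoungDiagram.mem_cells _).mpr hm1)
            omega
        exact iff_of_false (by omega) (fun hh => hh hij)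
      · intro h
        exact ⟨fun hq => (h m 1 hm1).mp hq hm1, fun hq => (h (m + 1) 0 hm0).mp hq hm0⟩
  have hB1 : ∑ T ∈ Finset.univ.filter
        (fun T : BddSsyt μ (N + 1) => ¬T.1 m 1 = N ∧ T.1 (m + 1) 0 = N),
      (Polynomial.X : Polynomial ℤ) ^ wt T.1
      = Polynomial.X ^ (1 * N) *
          ∑ T : BddSsyt (ydOf (twoOne (m + 1) 0)) N, (Polynomial.X : Polynomial ℤ) ^ wt T.1 := by
    refine transfer ?_ ?_ ?_ _ ?_
    · intro i j h
      rw [hmemB1] at h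
      exact (hmemμ i j).mpr (by omega)
    · intro i1 i2 j h12 h2 h2' h1
      rw [hmemμ] at h2 h1
      rw [hmemB1] at h2' ⊢
      omega
    · have : μ.cells \ (ydOf (twoOne (m + 1) 0)).cells = {(m + 1, 0)} := by
        ext ⟨i, j⟩
        simp only [Finset.mem_sdiff, YoungDiagram.mem_cells, Finset.mem_singleton,
          hmemμ, hmemB1, Prod.mk.injEq]
        omega
      rw [this, Finset.card_singleton]
    · intro T
      constructor
      · rintro ⟨hq2, hq1⟩ i j hij
        by_cases h' : (i, j) ∈ ydOf (twoOne (m + 1) 0)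
        · have hlt : T.1 i j < N := by
            rcases (hmemB1 i j).mp h' with ⟨rfl, hi⟩ | ⟨rfl, hi⟩
            · have c1 : T.1 i 0 < T.1 (m + 1) 0 := T.1.col_strict (by omega) hm0
              omega
            · have c1 : T.1 i 1 ≤ T.1 m 1 := T.1.col_weak (by omega) hm1
              have c3 : T.1 m 1 < N + 1 := T.2 _ ((YoungDiagram.mem_cells _).mpr hm1)
              omega
          exact iff_of_false (by omega) (fun hh => hh h')
        · have hij' : i = m + 1 ∧ j = 0 := by
            have h1 := (hmemμ i j).mp hij
            rw [hmemB1] at h'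
            omega
          refine iff_of_true ?_ h'
          rw [hij'.1, hij'.2]
          exact hq1
      · intro h
        constructor
        · intro hq
          have := (h m 1 hm1).mp hq
          rw [hmemB1] at this
          omega
        · refine (h (m + 1) 0 hm0).mpr ?_
          rw [hmemB1]
          omega
  have hB2 : ∑ T ∈ Finset.univ.filter
        (fun T : BddSsyt μ (N + 1) => T.1 m 1 = N ∧ ¬T.1 (m + 1) 0 = N),
      (Polynomial.X : Polynomial ℤ) ^ wt T.1
      = Polynomial.X ^ (1 * N) *
          ∑ T : BddSsyt (ydOf (twoOne m 2)) N, (Polynomial.X : Polynomial ℤ) ^ wt T.1 := by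
    refine transfer ?_ ?_ ?_ _ ?_
    · intro i j h
      rw [hmemB2] at h
      exact (hmemμ i j).mpr (by omega)
    · intro i1 i2 j h12 h2 h2' h1
      rw [hmemμ] at h2 h1
      rw [hmemB2] at h2' ⊢
      omega
    · have : μ.cells \ (ydOf (twoOne m 2)).cells = {(m, 1)} := by
        ext ⟨i, j⟩
        simp only [Finset.mem_sdiff, YoungDiagram.mem_cells, Finset.mem_singleton,
          hmemμ, hmemB2, Prod.mk.injEq]
        omega
      rw [this, Finset.card_singleton]
    · intro T
      constructor
      · rintro ⟨hq2, hq1⟩ i j hij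
        by_cases h' : (i, j) ∈ ydOf (twoOne m 2)
        · have hlt : T.1 i j < N := by
            rcases (hmemB2 i j).mp h' with ⟨rfl, hi⟩ | ⟨rfl, hi⟩
            · have c1 : T.1 i 0 ≤ T.1 (m + 1) 0 := T.1.col_weak (by omega) hm0
              have c3 : T.1 (m + 1) 0 < N + 1 := T.2 _ ((YoungDiagram.mem_cells _).mpr hm0)
              omega
            · have c1 : T.1 i 1 < T.1 m 1 := T.1.col_strict (by omega) hm1
              omega
          exact iff_of_false (by omega) (fun hh => hh h')
        · have hij' : i = m ∧ j = 1 := by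
            have h1 := (hmemμ i j).mp hij
            rw [hmemB2] at h'
            omega
          refine iff_of_true ?_ h'
          rw [hij'.1, hij'.2]
          exact hq2
      · intro h
        constructor
        · refine (h m 1 hm1).mpr ?_
          rw [hmemB2]
          omega
        · intro hq
          have := (h (m + 1) 0 hm0).mp hq
          rw [hmemB2] at this
          omega
  have hC : ∑ T ∈ Finset.univ.filter
        (fun T : BddSsyt μ (N + 1) => T.1 m 1 = N ∧ T.1 (m + 1) 0 = N),
      (Polynomial.X : Polynomial ℤ) ^ wt T.1
      = Polynomial.X ^ (2 * N) *
          ∑ T : BddSsyt (ydOf (twoOne m 1)) N, (Polynomial.X : Polynomial ℤ) ^ wt T.1 := by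
    refine transfer ?_ ?_ ?_ _ ?_
    · intro i j h
      rw [hmemC] at h
      exact (hmemμ i j).mpr (by omega)
    · intro i1 i2 j h12 h2 h2' h1
      rw [hmemμ] at h2 h1
      rw [hmemC] at h2' ⊢
      omega
    · have : μ.cells \ (ydOf (twoOne m 1)).cells = {(m, 1), (m + 1, 0)} := by
        ext ⟨i, j⟩
        simp only [Finset.mem_sdiff, YoungDiagram.mem_cells, Finset.mem_insert,
          Finset.mem_singleton, hmemμ, hmemC, Prod.mk.injEq]
        omega
      rw [this, Finset.card_insert_of_notMem (by simp), Finset.card_singleton]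
    · intro T
      constructor
      · rintro ⟨hq2, hq1⟩ i j hij
        by_cases h' : (i, j) ∈ ydOf (twoOne m 1)
        · have hlt : T.1 i j < N := by
            rcases (hmemC i j).mp h' with ⟨rfl, hi⟩ | ⟨rfl, hi⟩
            · have c1 : T.1 i 0 < T.1 (m + 1) 0 := T.1.col_strict (by omega) hm0
              omega
            · have c1 : T.1 i 1 < T.1 m 1 := T.1.col_strict (by omega) hm1
              omega
          exact iff_of_false (by omega) (fun hh => hh h')
        · have hij' : (i = m ∧ j = 1) ∨ (i = m + 1 ∧ j = 0) := by
            have h1 := (hmemμ i j).mp hij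
            rw [hmemC] at h'
            omega
          refine iff_of_true ?_ h'
          rcases hij' with ⟨rfl, rfl⟩ | ⟨rfl, rfl⟩
          · exact hq2
          · exact hq1
      · intro h
        constructor
        · refine (h m 1 hm1).mpr ?_
          rw [hmemC]; omega
        · refine (h (m + 1) 0 hm0).mpr ?_
          rw [hmemC]; omega
  rw [← Finset.sum_filter_add_sum_filter_not Finset.univ
      (fun T : BddSsyt μ (N + 1) => T.1 m 1 = N)]
  rw [← Finset.sum_filter_add_sum_filter_not
      (Finset.univ.filter (fun T : BddSsyt μ (N + 1) => T.1 m 1 = N))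
      (fun T : BddSsyt μ (N + 1) => T.1 (m + 1) 0 = N)]
  rw [← Finset.sum_filter_add_sum_filter_not
      (Finset.univ.filter (fun T : BddSsyt μ (N + 1) => ¬T.1 m 1 = N))
      (fun T : BddSsyt μ (N + 1) => T.1 (m + 1) 0 = N)]
  rw [Finset.filter_filter, Finset.filter_filter, Finset.filter_filter, Finset.filter_filter]
  rw [hA, hB1, hB2, hC]
  ring

/-- Recurrences for the principal specializations of `s_{(2^k)}` and `s_{(2^k,1)}`. -/
theorem psn_schur_recurrences (k n : ℕ) (hk : 1 ≤ k) (hn : 1 < n) :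
    (psn n (schur n (twoOne k 0))
        = psn (n - 1) (schur (n - 1) (twoOne k 0))
          + Polynomial.X ^ (n - 1) * psn (n - 1) (schur (n - 1) (twoOne (k - 1) 1))
          + Polynomial.X ^ (2 * (n - 1)) * psn (n - 1) (schur (n - 1) (twoOne (k - 1) 0)))
    ∧
    (psn n (schur n (twoOne k 1))
        = psn (n - 1) (schur (n - 1) (twoOne k 1))
          + Polynomial.X ^ (n - 1) *
              psn (n - 1) (schur (n - 1) (twoOne k 0) + schur (n - 1) (twoOne (k - 1) 2))
          + Polynomial.X ^ (2 * (n - 1)) * psn (n - 1) (schur (n - 1) (twoOne (k - 1) 1))) := by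
  obtain ⟨m, rfl⟩ : ∃ m, k = m + 1 := ⟨k - 1, by omega⟩
  obtain ⟨N, rfl⟩ : ∃ N, n = N + 1 := ⟨n - 1, by omega⟩
  have psn_schur : ∀ (M : ℕ) (mm : Multiset ℕ),
      psn M (schur M mm) = ∑ T : BddSsyt (ydOf mm) M, (Polynomial.X : Polynomial ℤ) ^ wt T.1 :=
    fun M mm => psn_schurYD M (ydOf mm)
  have psn_add : ∀ (M : ℕ) (f g : MvPolynomial (Fin M) ℤ),
      psn M (f + g) = psn M f + psn M g := fun M f g => map_add _ _ _
  constructor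
  · simp only [Nat.add_sub_cancel, psn_schur]
    exact partA m N
  · simp only [Nat.add_sub_cancel, psn_add, psn_schur]
    exact partB m N
end

section
/- Fix integers n ≥ 1 and 0 ≤ r < 2n. Define real functions f₁(x) = (n+1)(n−x+1)(n−x)²(n−x−1), f₂(x) = (n+1)(n−(r−x)+1)(n−(r−x))²(n−(r−x)−1), f₃(x) = (n−1)(n−x)(n−x+1)(n−(r−x))(n−(r−x)+1), and f(x) = f₁(x) + f₂(x) − 2f₃(x). Then f is monotone decreasing on the interval (−∞, r/2]: for all real x ≤ y ≤ r/2, f(y) ≤ f(x). -/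
/-- The quartic polynomial `f = f₁ + f₂ - 2 f₃` is monotone decreasing on `(-∞, r/2]`. -/
theorem quartic_monotone_decreasing (n r : ℤ) (hn : 1 ≤ n) (hr0 : 0 ≤ r) (hr : r < 2 * n)
    (f : ℝ → ℝ)
    (hf : ∀ x : ℝ, f x =
      ((n : ℝ) + 1) * ((n : ℝ) - x + 1) * ((n : ℝ) - x) ^ 2 * ((n : ℝ) - x - 1)
        + ((n : ℝ) + 1) * ((n : ℝ) - ((r : ℝ) - x) + 1) * ((n : ℝ) - ((r : ℝ) - x)) ^ 2 *
            ((n : ℝ) - ((r : ℝ) - x) - 1)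
        - 2 * (((n : ℝ) - 1) * ((n : ℝ) - x) * ((n : ℝ) - x + 1) *
            ((n : ℝ) - ((r : ℝ) - x)) * ((n : ℝ) - ((r : ℝ) - x) + 1))) :
    ∀ x y : ℝ, x ≤ y → y ≤ (r : ℝ) / 2 → f y ≤ f x := by
  intro x y hxy hyr
  have hn' : (1 : ℝ) ≤ (n : ℝ) := by exact_mod_cast hn
  have hrn : (r : ℝ) ≤ 2 * (n : ℝ) - 1 := by
    have h : ((r : ℤ) : ℝ) ≤ ((2 * n - 1 : ℤ) : ℝ) := by exact_mod_cast (by omega : r ≤ 2 * n - 1)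
    push_cast at h
    linarith
  set N : ℝ := (n : ℝ)
  set R : ℝ := (r : ℝ)
  set A : ℝ := 16 * N ^ 3 + 12 * N ^ 2 - 4 * N - 4 - 16 * N ^ 2 * R - 10 * N * R
      + 4 * N * R ^ 2 + 2 * R ^ 2 + 2 * R with hAdef
  have hA : 0 ≤ A := by
    have hs : 0 ≤ 2 * N - 1 - R := by linarith
    nlinarith [mul_nonneg hs hs, mul_nonneg (mul_nonneg (by linarith : (0:ℝ) ≤ N - 1) hs) hs,
      mul_nonneg (by linarith : (0:ℝ) ≤ N - 1) hs]
  have hxr : x - R / 2 ≤ y - R / 2 := by linarith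
  have hy0 : y - R / 2 ≤ 0 := by linarith
  have h1 : (y - R / 2) ^ 2 ≤ (x - R / 2) ^ 2 := by nlinarith
  have h2 : (y - R / 2) ^ 4 ≤ (x - R / 2) ^ 4 := by nlinarith [sq_nonneg (y - R/2), sq_nonneg (x - R/2)]
  have key : 0 ≤ A * ((x - R / 2) ^ 2 - (y - R / 2) ^ 2) := mul_nonneg hA (by linarith)
  rw [hf x, hf y]
  nlinarith [key, h2]
end

section
/- Fix integers n ≥ 1 and 0 ≤ r ≤ 2n. For 0 ≤ k ≤ ⌊r/2⌋ define α(n,r,k) = N(n+1,k)·N(n−1,r−k) + N(n+1,r−k)·N(n−1,k) − 2·N(n,r−k)·N(n,k). Then there exists an integer k′ such that α(n,r,k) ≥ 0 for all 0 ≤ k ≤ ⌊r/2⌋ with k ≤ k′, and α(n,r,k) ≤ 0 for all 0 ≤ k ≤ ⌊r/2⌋ with k > k′. -/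
/-- The Narayana number `N(m,j) = (1/m) C(m,j) C(m,j+1)` for `0 ≤ j ≤ m`, with the
conventions `N(m,j) = 0` if `j < 0` or `j > m`, `N(0,0) = 1`, and `N(0,j) = 0` for `j ≥ 1`. -/
noncomputable def narayana (m : ℕ) (j : ℤ) : ℚ :=
  if j < 0 ∨ (m : ℤ) < j then 0
  else if m = 0 then (if j = 0 then 1 else 0)
  else (m.choose j.toNat * m.choose (j.toNat + 1) : ℚ) / m

/-- `α(n,r,k) = N(n+1,k) N(n-1,r-k) + N(n+1,r-k) N(n-1,k) - 2 N(n,r-k) N(n,k)`. -/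
noncomputable def alphaNRK (n r k : ℕ) : ℚ :=
  narayana (n + 1) (k : ℤ) * narayana (n - 1) ((r : ℤ) - k)
    + narayana (n + 1) ((r : ℤ) - k) * narayana (n - 1) (k : ℤ)
    - 2 * narayana n ((r : ℤ) - k) * narayana n (k : ℤ)


def psiQ (n x y : ℚ) : ℚ :=
  (n+1)*(x^2*(x^2-1)+y^2*(y^2-1)) - 2*(n-1)*(x*(x+1))*(y*(y+1))

lemma narayana_nonneg (m : ℕ) (j : ℤ) : 0 ≤ narayana m j := by
  unfold narayana
  split_ifs <;> positivity

lemma narayana_of_le (m j : ℕ) (h1 : m ≠ 0) (h2 : j ≤ m) :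
    narayana m (j : ℤ) = (m.choose j * m.choose (j+1) : ℚ) / m := by
  unfold narayana
  rw [if_neg (by push_neg; exact ⟨Int.ofNat_nonneg j, by exact_mod_cast h2⟩), if_neg h1]
  simp

lemma narayana_zero (m j : ℕ) (h1 : m ≠ 0) (h : m ≤ j) : narayana m (j : ℤ) = 0 := by
  rcases lt_or_eq_of_le h with h' | h'
  · unfold narayana
    rw [if_pos (Or.inr (by exact_mod_cast h'))]
  · rw [← h']
    rw [narayana_of_le m m h1 le_rfl, Nat.choose_eq_zero_of_lt (Nat.lt_succ_self m)]
    simp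

lemma choose_id (m j : ℕ) :
    ((m+1).choose j : ℚ) * ((m:ℚ) + 1 - j) = ((m:ℚ) + 1) * (m.choose j) := by
  rcases le_or_gt j (m+1) with h | h
  · have hnat : (m+1).choose j * ((m+1) - j) = (m+1) * m.choose j := by
      rw [← Nat.choose_succ_right_eq, ← Nat.add_one_mul_choose_eq]
    have := congrArg (fun x : ℕ => (x : ℚ)) hnat
    push_cast [Nat.cast_sub h] at this
    linarith [this]
  · rw [Nat.choose_eq_zero_of_lt h, Nat.choose_eq_zero_of_lt (by omega)]
    simp

lemma psi_step (n x y : ℚ) (hy : 1 ≤ y) (hx : y + 2 ≤ x) (hn : x ≤ n) :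
    psiQ n (x-1) (y+1) ≤ psiQ n x y := by
  obtain ⟨C, hC, rfl⟩ : ∃ C, 0 ≤ C ∧ y = C + 1 := ⟨y - 1, by linarith, by ring⟩
  obtain ⟨A, hA, rfl⟩ : ∃ A, 0 ≤ A ∧ x = A + C + 3 := ⟨x - C - 3, by linarith, by ring⟩
  obtain ⟨B, hB, rfl⟩ : ∃ B, 0 ≤ B ∧ n = B + A + C + 3 := ⟨n - A - C - 3, by linarith, by ring⟩
  have key : psiQ (B+A+C+3) (A+C+3) (C+1) - psiQ (B+A+C+3) ((A+C+3)-1) ((C+1)+1) =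
      240 + 304*C + 124*C^2 + 16*C^3 + 72*B + 68*B*C + 16*B*C^2 + 432*A + 462*A*C + 156*A*C^2 + 16*A*C^3 + 106*A*B + 84*A*B*C + 16*A*B*C^2 + 242*A^2 + 178*A^2*C + 32*A^2*C^2 + 38*A^2*B + 16*A^2*B*C + 54*A^3 + 20*A^3*C + 4*A^3*B + 4*A^4 := by
    simp only [psiQ]; ring
  have f1 : 0 ≤ C := by positivity
  have f2 : 0 ≤ C^2 := by positivity
  have f3 : 0 ≤ C^3 := by positivity
  have f4 : 0 ≤ B := by positivity
  have f5 : 0 ≤ B * C := by positivity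
  have f6 : 0 ≤ B * C^2 := by positivity
  have f7 : 0 ≤ A := by positivity
  have f8 : 0 ≤ A * C := by positivity
  have f9 : 0 ≤ A * C^2 := by positivity
  have f10 : 0 ≤ A * C^3 := by positivity
  have f11 : 0 ≤ A * B := by positivity
  have f12 : 0 ≤ A * B * C := by positivity
  have f13 : 0 ≤ A * B * C^2 := by positivity
  have f14 : 0 ≤ A^2 := by positivity
  have f15 : 0 ≤ A^2 * C := by positivity
  have f16 : 0 ≤ A^2 * C^2 := by positivity
  have f17 : 0 ≤ A^2 * B := by positivity
  have f18 : 0 ≤ A^2 * B * C := by positivity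
  have f19 : 0 ≤ A^3 := by positivity
  have f20 : 0 ≤ A^3 * C := by positivity
  have f21 : 0 ≤ A^3 * B := by positivity
  have f22 : 0 ≤ A^4 := by positivity
  linarith [key]

set_option maxHeartbeats 2000000 in
lemma alpha_formula (n k t : ℕ) (hn : 2 ≤ n) (hk : k + 1 ≤ n) (ht : t + 1 ≤ n) :
    alphaNRK n (k + t) k =
      (n.choose k * n.choose (k+1) * n.choose t * n.choose (t+1) : ℚ) /
        ((n:ℚ)^2 * ((n:ℚ)-1) * ((n:ℚ)-k) * ((n:ℚ)+1-k) * ((n:ℚ)-t) * ((n:ℚ)+1-t)) *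
      psiQ (n:ℚ) ((n:ℚ)-k) ((n:ℚ)-t) := by
  have hn1 : 1 ≤ n := by omega
  have harg : ((k + t : ℕ) : ℤ) - (k : ℤ) = (t : ℤ) := by push_cast; ring
  have hnm : ((n - 1 : ℕ) : ℚ) = (n : ℚ) - 1 := by
    have : (1:ℕ) ≤ n := hn1
    push_cast [this]; ring
  -- cast facts
  have hQn : (0:ℚ) < n := by exact_mod_cast Nat.pos_of_ne_zero (by omega)
  have hQn1 : (0:ℚ) < (n:ℚ) - 1 := by
    have : (1:ℚ) < n := by exact_mod_cast hn
    linarith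
  have hQk : (k:ℚ) < n := by exact_mod_cast hk
  have hQt : (t:ℚ) < n := by exact_mod_cast ht
  -- choose relations
  have hA : ((n+1).choose k : ℚ) * ((n:ℚ) + 1 - k) = ((n:ℚ)+1) * (n.choose k) := choose_id n k
  have hB : ((n+1).choose (k+1) : ℚ) * ((n:ℚ) - k) = ((n:ℚ)+1) * (n.choose (k+1)) := by
    have := choose_id n (k+1); push_cast at this ⊢; linarith [this]
  have hC : ((n+1).choose t : ℚ) * ((n:ℚ) + 1 - t) = ((n:ℚ)+1) * (n.choose t) := choose_id n t
  have hD : ((n+1).choose (t+1) : ℚ) * ((n:ℚ) - t) = ((n:ℚ)+1) * (n.choose (t+1)) := by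
    have := choose_id n (t+1); push_cast at this ⊢; linarith [this]
  have hsub : n - 1 + 1 = n := by omega
  have hA' : (n.choose k : ℚ) * ((n:ℚ) - k) = (n:ℚ) * ((n-1).choose k) := by
    have := choose_id (n-1) k
    rw [hsub] at this
    rw [hnm] at this
    push_cast at this ⊢; linarith [this]
  have hB' : (n.choose (k+1) : ℚ) * ((n:ℚ) - k - 1) = (n:ℚ) * ((n-1).choose (k+1)) := by
    have := choose_id (n-1) (k+1)
    rw [hsub] at this
    rw [hnm] at this
    push_cast at this ⊢; linarith [this]
  have hC' : (n.choose t : ℚ) * ((n:ℚ) - t) = (n:ℚ) * ((n-1).choose t) := by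
    have := choose_id (n-1) t
    rw [hsub] at this
    rw [hnm] at this
    push_cast at this ⊢; linarith [this]
  have hD' : (n.choose (t+1) : ℚ) * ((n:ℚ) - t - 1) = (n:ℚ) * ((n-1).choose (t+1)) := by
    have := choose_id (n-1) (t+1)
    rw [hsub] at this
    rw [hnm] at this
    push_cast at this ⊢; linarith [this]
  -- expand alphaNRK
  unfold alphaNRK
  rw [harg]
  rw [narayana_of_le (n+1) k (by omega) (by omega),
      narayana_of_le (n+1) t (by omega) (by omega),
      narayana_of_le (n-1) k (by omega) (by omega),
      narayana_of_le (n-1) t (by omega) (by omega),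
      narayana_of_le n k (by omega) (by omega),
      narayana_of_le n t (by omega) (by omega)]
  have d1 : ((n:ℚ) + 1 - k) ≠ 0 := by linarith
  have d2 : ((n:ℚ) - k) ≠ 0 := by linarith
  have d3 : ((n:ℚ) + 1 - t) ≠ 0 := by linarith
  have d4 : ((n:ℚ) - t) ≠ 0 := by linarith
  have dn : ((n:ℚ)) ≠ 0 := ne_of_gt hQn
  have dn1 : ((n:ℚ) - 1) ≠ 0 := ne_of_gt hQn1
  have dn2 : ((n:ℚ) + 1) ≠ 0 := by linarith
  have eA : ((n+1).choose k : ℚ) = ((n:ℚ)+1) * (n.choose k) / ((n:ℚ)+1-k) := by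
    rw [eq_div_iff d1]; linarith [hA]
  have eB : ((n+1).choose (k+1) : ℚ) = ((n:ℚ)+1) * (n.choose (k+1)) / ((n:ℚ)-k) := by
    rw [eq_div_iff d2]; linarith [hB]
  have eC : ((n+1).choose t : ℚ) = ((n:ℚ)+1) * (n.choose t) / ((n:ℚ)+1-t) := by
    rw [eq_div_iff d3]; linarith [hC]
  have eD : ((n+1).choose (t+1) : ℚ) = ((n:ℚ)+1) * (n.choose (t+1)) / ((n:ℚ)-t) := by
    rw [eq_div_iff d4]; linarith [hD]
  have eA' : ((n-1).choose k : ℚ) = (n.choose k : ℚ) * ((n:ℚ)-k) / n := by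
    rw [eq_div_iff dn]; linarith [hA']
  have eB' : ((n-1).choose (k+1) : ℚ) = (n.choose (k+1) : ℚ) * ((n:ℚ)-k-1) / n := by
    rw [eq_div_iff dn]; linarith [hB']
  have eC' : ((n-1).choose t : ℚ) = (n.choose t : ℚ) * ((n:ℚ)-t) / n := by
    rw [eq_div_iff dn]; linarith [hC']
  have eD' : ((n-1).choose (t+1) : ℚ) = (n.choose (t+1) : ℚ) * ((n:ℚ)-t-1) / n := by
    rw [eq_div_iff dn]; linarith [hD']
  rw [eA, eB, eC, eD, eA', eB', eC', eD', hnm]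
  push_cast
  rw [psiQ]
  field_simp
  ring

lemma alpha_nonneg_of_big_t (n r k : ℕ) (hn : 2 ≤ n) (hk : k ≤ r) (ht : n ≤ r - k) :
    0 ≤ alphaNRK n r k := by
  have harg : ((r : ℕ) : ℤ) - (k : ℤ) = ((r - k : ℕ) : ℤ) := by
    push_cast [hk]; ring
  unfold alphaNRK
  rw [harg, narayana_zero n (r-k) (by omega) ht, narayana_zero (n-1) (r-k) (by omega) (by omega)]
  have := narayana_nonneg (n+1) ((r-k : ℕ) : ℤ)
  have := narayana_nonneg (n-1) (k : ℤ)
  nlinarith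

lemma alpha_nonneg_of_big_k (n r k : ℕ) (hn : 2 ≤ n) (hk : n ≤ k) :
    0 ≤ alphaNRK n r k := by
  unfold alphaNRK
  rw [narayana_zero n k (by omega) hk, narayana_zero (n-1) k (by omega) (by omega)]
  have := narayana_nonneg (n+1) ((k : ℤ))
  have := narayana_nonneg (n-1) ((r : ℤ) - k)
  nlinarith

lemma alpha_step (n r k : ℕ) (hn : 2 ≤ n) (hr : r ≤ 2*n) (h2 : 2*k + 2 ≤ r)
    (hneg : alphaNRK n r k < 0) : alphaNRK n r (k+1) < 0 := by
  set t := r - k with htdef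
  have hkt : k + 2 ≤ t := by omega
  have hrkt : r = k + t := by omega
  -- interior: t ≤ n - 1
  have htn : t + 1 ≤ n := by
    by_contra hcon
    exact absurd (alpha_nonneg_of_big_t n r k hn (by omega) (by omega)) (not_le.mpr hneg)
  have hkn : k + 1 ≤ n := by omega
  have hkn2 : (k+1) + 1 ≤ n := by omega
  have htn2 : (t-1) + 1 ≤ n := by omega
  -- cast facts
  have hQk : (k:ℚ) < n := by exact_mod_cast hkn
  have hQt : (t:ℚ) < n := by exact_mod_cast htn
  have hQn1 : (1:ℚ) < n := by exact_mod_cast (by omega : 1 < n)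
  have hQkt : (k:ℚ) + 2 ≤ t := by exact_mod_cast hkt
  have hQt1 : (t:ℚ) + 1 ≤ n := by exact_mod_cast htn
  have hQk1 : (k:ℚ) + 1 ≤ n := by exact_mod_cast hkn
  -- prefactor at k positive
  have hposP : 0 < (n.choose k * n.choose (k+1) * n.choose t * n.choose (t+1) : ℚ) /
      ((n:ℚ)^2 * ((n:ℚ)-1) * ((n:ℚ)-k) * ((n:ℚ)+1-k) * ((n:ℚ)-t) * ((n:ℚ)+1-t)) := by
    apply div_pos
    · have c1 := Nat.choose_pos (show k ≤ n by omega)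
      have c2 := Nat.choose_pos (show k+1 ≤ n by omega)
      have c3 := Nat.choose_pos (show t ≤ n by omega)
      have c4 := Nat.choose_pos (show t+1 ≤ n by omega)
      positivity
    · have p0 : (0:ℚ) < (n:ℚ)^2 := by positivity
      have p1 : (0:ℚ) < (n:ℚ)-1 := by linarith
      have p2 : (0:ℚ) < (n:ℚ)-k := by linarith
      have p3 : (0:ℚ) < (n:ℚ)+1-k := by linarith
      have p4 : (0:ℚ) < (n:ℚ)-t := by linarith
      have p5 : (0:ℚ) < (n:ℚ)+1-t := by linarith
      exact mul_pos (mul_pos (mul_pos (mul_pos (mul_pos p0 p1) p2) p3) p4) p5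
  have hfk := alpha_formula n k t hn hkn htn
  rw [← hrkt] at hfk
  rw [hfk] at hneg
  have hpsi : psiQ (n:ℚ) ((n:ℚ)-k) ((n:ℚ)-t) < 0 := by
    by_contra hcon
    push_neg at hcon
    exact absurd hneg (not_lt.mpr (mul_nonneg hposP.le hcon))
  -- monotonicity
  have hstep := psi_step (n:ℚ) ((n:ℚ)-k) ((n:ℚ)-t) (by linarith) (by linarith) (by linarith)
  have hpsi' : psiQ (n:ℚ) ((n:ℚ)-k-1) ((n:ℚ)-t+1) < 0 := by
    have e1 : (n:ℚ)-k-1 = (n:ℚ)-k-1 := rfl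
    calc psiQ (n:ℚ) ((n:ℚ)-k-1) ((n:ℚ)-t+1)
        = psiQ (n:ℚ) ((n:ℚ)-k-1) (((n:ℚ)-t)+1) := by norm_num
      _ ≤ psiQ (n:ℚ) ((n:ℚ)-k) ((n:ℚ)-t) := hstep
      _ < 0 := hpsi
  -- formula at k+1
  have hrkt' : r = (k+1) + (t-1) := by omega
  have hfk1 := alpha_formula n (k+1) (t-1) hn hkn2 htn2
  rw [← hrkt'] at hfk1
  have hc1 : ((k+1:ℕ):ℚ) = (k:ℚ) + 1 := by push_cast; ring
  have hc2 : ((t-1:ℕ):ℚ) = (t:ℚ) - 1 := by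
    have : (1:ℕ) ≤ t := by omega
    push_cast [this]; ring
  rw [hc1, hc2] at hfk1
  rw [hfk1]
  apply mul_neg_of_pos_of_neg
  · apply div_pos
    · have c1 := Nat.choose_pos (show k+1 ≤ n by omega)
      have c2 := Nat.choose_pos (show k+1+1 ≤ n by omega)
      have c3 := Nat.choose_pos (show t-1 ≤ n by omega)
      have c4 := Nat.choose_pos (show t-1+1 ≤ n by omega)
      positivity
    · have p0 : (0:ℚ) < (n:ℚ)^2 := by positivity
      have p1 : (0:ℚ) < (n:ℚ)-1 := by linarith
      have p2 : (0:ℚ) < (n:ℚ)-((k:ℚ)+1) := by linarith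
      have p3 : (0:ℚ) < (n:ℚ)+1-((k:ℚ)+1) := by linarith
      have p4 : (0:ℚ) < (n:ℚ)-((t:ℚ)-1) := by linarith
      have p5 : (0:ℚ) < (n:ℚ)+1-((t:ℚ)-1) := by linarith
      exact mul_pos (mul_pos (mul_pos (mul_pos (mul_pos p0 p1) p2) p3) p4) p5
  · have e1 : (n:ℚ) - ((k:ℚ)+1) = (n:ℚ)-k-1 := by ring
    have e2 : (n:ℚ) - ((t:ℚ)-1) = (n:ℚ)-t+1 := by ring
    rw [e1, e2]
    exact hpsi'

lemma alpha_one (r k : ℕ) (hr : r ≤ 2) (hk : k ≤ r / 2) : 0 ≤ alphaNRK 1 r k := by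
  interval_cases r <;> interval_cases k <;>
    · unfold alphaNRK narayana
      norm_num
      try positivity

lemma alpha_prop (n r : ℕ) (hn : 2 ≤ n) (hr : r ≤ 2*n) :
    ∀ d k, alphaNRK n r k < 0 → 2*(k+d) ≤ r → alphaNRK n r (k+d) ≤ 0 := by
  intro d
  induction d with
  | zero => intro k h _; exact h.le
  | succ d ih =>
    intro k h hle
    have h1 : alphaNRK n r (k+1) < 0 := alpha_step n r k hn hr (by omega) h
    have := ih (k+1) h1 (by omega)
    have e : k+1+d = k+(d+1) := by omega
    rwa [e] at this


/-- For fixed `n ≥ 1` and `0 ≤ r ≤ 2n` there is an integer `k'` such that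
`α(n,r,k) ≥ 0` for `k ≤ k'` and `α(n,r,k) ≤ 0` for `k > k'`, for `0 ≤ k ≤ ⌊r/2⌋`. -/
theorem alphaNRK_sign_change (n r : ℕ) (hn : 1 ≤ n) (hr : r ≤ 2 * n) :
    ∃ k' : ℤ, ∀ k : ℕ, k ≤ r / 2 →
      ((k : ℤ) ≤ k' → 0 ≤ alphaNRK n r k) ∧ (k' < (k : ℤ) → alphaNRK n r k ≤ 0) := by
  classical
  by_cases hS : ∃ k, k ≤ r / 2 ∧ alphaNRK n r k < 0
  · -- there is a negative value
    rcases lt_or_ge n 2 with hn1 | hn2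
    · -- n = 1 : contradiction
      have hn1' : n = 1 := by omega
      subst hn1'
      obtain ⟨k, hk, hneg⟩ := hS
      exact absurd (alpha_one r k hr hk) (not_le.mpr hneg)
    · set k₀ := Nat.find hS with hk₀
      have hspec := Nat.find_spec hS
      refine ⟨(k₀ : ℤ) - 1, fun k hk => ⟨fun hle => ?_, fun hlt => ?_⟩⟩
      · have hklt : k < k₀ := by omega
        have := Nat.find_min hS hklt
        push_neg at this
        exact this hk
      · have hkge : k₀ ≤ k := by omega
        have := alpha_prop n r hn2 hr (k - k₀) k₀ hspec.2 (by omega)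
        rwa [show k₀ + (k - k₀) = k by omega] at this
  · push_neg at hS
    refine ⟨(r / 2 : ℕ), fun k hk => ⟨fun _ => hS k hk, fun hlt => ?_⟩⟩
    exfalso
    exact absurd (by exact_mod_cast hlt) (not_lt.mpr hk)
end
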